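/- arXiv:1210.6325 — 5 statements merged into one kernel-verified Lean document; each statement's English description precedes it below -/
import Mathlib

section
/- Let V : ℝ → ℝ be continuous, let t < s, and let E₀ ∈ ℝ satisfy |tr A[V](E₀,t,s)| < 2. Then on the open set of energies E with |tr A[V](E,t,s)| < 2, the function E ↦ Θ(A[V](E,t,s)) is differentiable at E₀ and (d/dE) Θ(A[V](E,t,s))|_{E=E₀} > 0. (Lemma 2.1.) -/
open MeasureTheory Filter Real
noncomputable section

attribute [local instance] Matrix.normedAddCommGroup Matrix.normedSpace
attribute [local instance] Classical.propDecidable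

/-- The rotation matrix of angle `2πθ`. -/
def rot (θ : ℝ) : Matrix (Fin 2) (Fin 2) ℝ :=
  !![Real.cos (2 * π * θ), -Real.sin (2 * π * θ);
     Real.sin (2 * π * θ), Real.cos (2 * π * θ)]

/-- The Möbius action of a real 2×2 matrix on ℂ. -/
def moebius (A : Matrix (Fin 2) (Fin 2) ℝ) (z : ℂ) : ℂ :=
  ((A 0 0 : ℝ) * z + (A 0 1 : ℝ)) / ((A 1 0 : ℝ) * z + (A 1 1 : ℝ))

/-- The fixed point `u(A)` in the upper half-plane of an elliptic `A ∈ SL(2,ℝ)`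
(junk value `i` if there is none). -/
def fixedPt (A : Matrix (Fin 2) (Fin 2) ℝ) : ℂ :=
  if h : ∃ z : ℂ, 0 < z.im ∧ moebius A z = z then h.choose else Complex.I

/-- `θ ∈ (0,1/2) ∪ (1/2,1)` is a rotation number for `A` if `A` is conjugate in `SL(2,ℝ)`
to the rotation `R_θ`. -/
def IsRotationNumber (A : Matrix (Fin 2) (Fin 2) ℝ) (θ : ℝ) : Prop :=
  (θ ∈ Set.Ioo (0:ℝ) (1/2) ∪ Set.Ioo (1/2:ℝ) 1) ∧
    ∃ B : Matrix (Fin 2) (Fin 2) ℝ, B.det = 1 ∧ B * A * B⁻¹ = rot θ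

/-- `Θ(A)`: the rotation number of an elliptic `A ∈ SL(2,ℝ)` (junk value `0` if none). -/
def Theta (A : Matrix (Fin 2) (Fin 2) ℝ) : ℝ :=
  if h : ∃ θ : ℝ, IsRotationNumber A θ then h.choose else 0

/-- The hyperbolic distance on the upper half-plane. -/
def hypDist (z w : ℂ) : ℝ :=
  2 * Real.arsinh (‖z - w‖ / (2 * Real.sqrt (z.im * w.im)))

/-- `A` is the family of transfer matrices `A[V](E,t,s)` of the continuum Schrödinger
operator with potential `V`: `A[V](E,t,t) = Id`, it takes values in `SL(2,ℝ)`, and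
`(d/ds) A[V](E,t,s) = [[0, −E−V(s)],[1,0]] · A[V](E,t,s)`. -/
def IsTransferFamily (V : ℝ → ℝ) (A : ℝ → ℝ → ℝ → Matrix (Fin 2) (Fin 2) ℝ) : Prop :=
  (∀ E t, A E t t = 1) ∧
  (∀ E t s, (A E t s).det = 1) ∧
  (∀ E t s, HasDerivAt (fun s' => A E t s') (!![0, -E - V s; 1, 0] * A E t s) s)

open Topology
set_option maxHeartbeats 16000000

def inv2 (A : Matrix (Fin 2) (Fin 2) ℝ) : Matrix (Fin 2) (Fin 2) ℝ :=
  !![A 1 1, -A 0 1; -A 1 0, A 0 0]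

lemma norm_matrix_le {X : Matrix (Fin 2) (Fin 2) ℝ} {r : ℝ} (hr : 0 ≤ r)
    (h : ∀ i j, |X i j| ≤ r) : ‖X‖ ≤ r := by
  rw [Matrix.norm_le_iff hr]; intro i j; simpa using h i j

lemma norm_fin_two_le {a b c d r : ℝ} (hr : 0 ≤ r) (h00 : |a| ≤ r) (h01 : |b| ≤ r)
    (h10 : |c| ≤ r) (h11 : |d| ≤ r) : ‖(!![a,b;c,d] : Matrix (Fin 2) (Fin 2) ℝ)‖ ≤ r := by
  apply norm_matrix_le hr
  intro i j
  fin_cases i <;> fin_cases j <;> simpa using by assumption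

lemma fin_two_sub (a b c d e f g h : ℝ) :
    (!![a,b;c,d] : Matrix (Fin 2) (Fin 2) ℝ) - !![e,f;g,h] = !![a-e,b-f;c-g,d-h] := by
  ext i j
  fin_cases i <;> fin_cases j <;> simp

lemma fin_two_add (a b c d e f g h : ℝ) :
    (!![a,b;c,d] : Matrix (Fin 2) (Fin 2) ℝ) + !![e,f;g,h] = !![a+e,b+f;c+g,d+h] := by
  ext i j
  fin_cases i <;> fin_cases j <;> simp

lemma fin_two_smul (r a b c d : ℝ) :
    r • (!![a,b;c,d] : Matrix (Fin 2) (Fin 2) ℝ) = !![r*a,r*b;r*c,r*d] := by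
  ext i j
  fin_cases i <;> fin_cases j <;> simp

lemma fin_two_congr {a b c d a' b' c' d' : ℝ} (h1 : a = a') (h2 : b = b') (h3 : c = c')
    (h4 : d = d') : (!![a,b;c,d] : Matrix (Fin 2) (Fin 2) ℝ) = !![a',b';c',d'] := by
  rw [h1, h2, h3, h4]

lemma continuous_inv2 {X : ℝ → Matrix (Fin 2) (Fin 2) ℝ} (h : Continuous X) :
    Continuous fun u => inv2 (X u) := by
  apply continuous_matrix
  intro i j
  fin_cases i <;> fin_cases j <;> simp only [inv2] <;> simp <;>
    first
      | exact h.matrix_elem _ _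
      | exact (h.matrix_elem _ _).neg


lemma hasDerivAt_matrix {f : ℝ → Matrix (Fin 2) (Fin 2) ℝ} {f' : Matrix (Fin 2) (Fin 2) ℝ} {x : ℝ} :
    HasDerivAt f f' x ↔ ∀ i j, HasDerivAt (fun τ => f τ i j) (f' i j) x := by
  exact hasDerivAt_pi.trans (forall_congr' fun i => hasDerivAt_pi)

lemma HasDerivAt.matMul {f g : ℝ → Matrix (Fin 2) (Fin 2) ℝ} {f' g' : Matrix (Fin 2) (Fin 2) ℝ}
    {x : ℝ} (hf : HasDerivAt f f' x) (hg : HasDerivAt g g' x) :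
    HasDerivAt (fun τ => f τ * g τ) (f' * g x + f x * g') x := by
  rw [hasDerivAt_matrix] at hf hg ⊢
  intro i j
  have h := (((hf i 0).mul (hg 0 j)).add ((hf i 1).mul (hg 1 j)))
  have heq : ∀ τ, (f τ * g τ) i j = f τ i 0 * g τ 0 j + f τ i 1 * g τ 1 j := fun τ => by
    rw [Matrix.mul_apply, Fin.sum_univ_two]
  have heq' : (f' * g x + f x * g') i j
      = (f' i 0 * g x 0 j + f x i 0 * g' 0 j) + (f' i 1 * g x 1 j + f x i 1 * g' 1 j) := by
    simp [Matrix.mul_apply, Fin.sum_univ_two, Matrix.add_apply]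
    ring
  rw [heq']
  exact h.congr_of_eventuallyEq (by filter_upwards with τ using heq τ)

lemma norm_mul_le₂ (X Y : Matrix (Fin 2) (Fin 2) ℝ) : ‖X * Y‖ ≤ 2 * ‖X‖ * ‖Y‖ := by
  apply norm_matrix_le (by positivity)
  intro i j
  rw [Matrix.mul_apply, Fin.sum_univ_two]
  have h1 : ∀ (a : Fin 2) (b : Fin 2), |X a b| ≤ ‖X‖ := fun a b => by
    simpa using Matrix.norm_entry_le_entrywise_sup_norm X (i := a) (j := b)
  have h2 : ∀ (a : Fin 2) (b : Fin 2), |Y a b| ≤ ‖Y‖ := fun a b => by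
    simpa using Matrix.norm_entry_le_entrywise_sup_norm Y (i := a) (j := b)
  have hX : (0:ℝ) ≤ ‖X‖ := norm_nonneg X
  have hY : (0:ℝ) ≤ ‖Y‖ := norm_nonneg Y
  calc |X i 0 * Y 0 j + X i 1 * Y 1 j| ≤ |X i 0 * Y 0 j| + |X i 1 * Y 1 j| := abs_add_le _ _
    _ = |X i 0| * |Y 0 j| + |X i 1| * |Y 1 j| := by rw [abs_mul, abs_mul]
    _ ≤ ‖X‖ * ‖Y‖ + ‖X‖ * ‖Y‖ := by
        gcongr <;> first | exact h1 _ _ | exact h2 _ _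
    _ = 2 * ‖X‖ * ‖Y‖ := by ring

lemma norm_one_le₂ : ‖(1 : Matrix (Fin 2) (Fin 2) ℝ)‖ ≤ 1 := by
  apply norm_matrix_le zero_le_one
  intro i j
  rw [Matrix.one_apply]
  split <;> simp

lemma trace_mul_N (B : Matrix (Fin 2) (Fin 2) ℝ) :
    (B * !![(0:ℝ), -1; 0, 0]).trace = - B 1 0 := by
  nth_rewrite 1 [Matrix.eta_fin_two B]
  rw [Matrix.mul_fin_two, Matrix.trace_fin_two]
  simp

lemma inv2_eq_inv {A : Matrix (Fin 2) (Fin 2) ℝ} (h : A.det = 1) : A⁻¹ = inv2 A := by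
  rw [Matrix.inv_def, h, Matrix.adjugate_fin_two, inv2]
  simp

lemma mul_inv2 {A : Matrix (Fin 2) (Fin 2) ℝ} (h : A.det = 1) : A * inv2 A = 1 := by
  have := Matrix.mul_adjugate A
  rw [h, one_smul] at this
  rw [inv2, ← Matrix.adjugate_fin_two]
  exact this

lemma r_ne_zero {A : Matrix (Fin 2) (Fin 2) ℝ} (hdet : A.det = 1) (htr : |A.trace| < 2) :
    A 1 0 ≠ 0 := by
  intro h
  rw [Matrix.det_fin_two, h, mul_zero, sub_zero] at hdet
  rw [Matrix.trace_fin_two, abs_lt] at htr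
  nlinarith [sq_nonneg (A 0 0 - A 1 1), htr.1, htr.2]

lemma quadForm_pos {p q r u c d : ℝ} (hdet : p * u - q * r = 1) (htr : (p + u)^2 < 4)
    (hcd : ¬(c = 0 ∧ d = 0)) : 0 < r * (r * d^2 + (p - u) * c * d - q * c^2) := by
  rcases eq_or_ne c 0 with hc | hc
  · have hd : d ≠ 0 := fun hd => hcd ⟨hc, hd⟩
    have hr : r ≠ 0 := by
      intro hr
      have hq : q * r = 0 := by rw [hr]; ring
      nlinarith [sq_nonneg (p - u)]
    subst hc
    have h1 : 0 < r ^ 2 := by positivity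
    have h2 : 0 < d ^ 2 := by positivity
    nlinarith [mul_pos h1 h2]
  · have hc2 : 0 < c ^ 2 := by positivity
    have h4 : 0 < 4 - (p + u)^2 := by nlinarith
    have key : 4 * (r * (r * d^2 + (p - u) * c * d - q * c^2))
        = (2*r*d + (p-u)*c)^2 + c^2 * (4 - (p+u)^2) := by
      linear_combination (4*c^2) * hdet
    nlinarith [sq_nonneg (2*r*d + (p-u)*c), mul_pos hc2 h4]

lemma conj_entry (g X : Matrix (Fin 2) (Fin 2) ℝ) :
    (g * X * inv2 g) 1 0 =
      X 1 0 * (g 1 1)^2 + (X 0 0 - X 1 1) * (g 1 0) * (g 1 1) - X 0 1 * (g 1 0)^2 := by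
  rw [inv2]
  nth_rewrite 1 [Matrix.eta_fin_two g, Matrix.eta_fin_two X]
  simp [Matrix.mul_fin_two]
  ring

lemma row_ne {g : Matrix (Fin 2) (Fin 2) ℝ} (h : g.det = 1) : ¬(g 1 0 = 0 ∧ g 1 1 = 0) := by
  rintro ⟨h1, h2⟩
  rw [Matrix.det_fin_two, h1, h2] at h
  simp at h

/-- the canonical formula for the rotation number -/
def phi (A : Matrix (Fin 2) (Fin 2) ℝ) : ℝ :=
  if 0 < A 1 0 then arccos (A.trace / 2) / (2 * π) else 1 - arccos (A.trace / 2) / (2 * π)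

lemma rot_trace (θ : ℝ) : (rot θ).trace = 2 * Real.cos (2 * π * θ) := by
  rw [rot, Matrix.trace_fin_two]
  simp
  ring

lemma rotnum_unique {A : Matrix (Fin 2) (Fin 2) ℝ} (hdet : A.det = 1) (htr : |A.trace| < 2)
    {θ : ℝ} (h : IsRotationNumber A θ) : θ = phi A := by
  obtain ⟨hmem, B, hB, hBA⟩ := h
  have hBu : IsUnit B.det := by rw [hB]; exact isUnit_one
  have hBinv : B⁻¹ * B = 1 := Matrix.nonsing_inv_mul B hBu
  have hBinv' : B * B⁻¹ = 1 := Matrix.mul_nonsing_inv B hBu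
  have hdetBinv : (B⁻¹).det = 1 := by
    have := Matrix.det_nonsing_inv (A := B)
    rw [hB] at this
    simpa using this
  -- A = B⁻¹ * rot θ * B
  have hA : A = B⁻¹ * rot θ * B := by
    rw [← hBA]
    calc A = (B⁻¹ * B) * A * (B⁻¹ * B) := by rw [hBinv]; simp [Matrix.mul_assoc]
    _ = B⁻¹ * (B * A * B⁻¹) * B := by simp only [Matrix.mul_assoc]
  -- trace equality
  have htrace : A.trace = 2 * Real.cos (2 * π * θ) := by
    rw [← rot_trace θ, ← hBA, Matrix.trace_mul_cycle, hBinv, Matrix.one_mul]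
  -- sign computation
  have hA2 : A = B⁻¹ * rot θ * inv2 (B⁻¹) := by
    rw [hA, ← inv2_eq_inv hdetBinv, Matrix.nonsing_inv_nonsing_inv B hBu]
  have hsign : A 1 0 = Real.sin (2 * π * θ) * ((B⁻¹ 1 1)^2 + (B⁻¹ 1 0)^2) := by
    rw [hA2, conj_entry]
    rw [rot]
    simp
    ring
  have hrow : ¬(B⁻¹ 1 0 = 0 ∧ B⁻¹ 1 1 = 0) := row_ne hdetBinv
  have hfac : 0 < (B⁻¹ 1 1)^2 + (B⁻¹ 1 0)^2 := by
    rcases not_and_or.mp hrow with h0 | h0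
    · have : 0 < (B⁻¹ 1 0)^2 := by positivity
      nlinarith [sq_nonneg (B⁻¹ 1 1)]
    · have : 0 < (B⁻¹ 1 1)^2 := by positivity
      nlinarith [sq_nonneg (B⁻¹ 1 0)]
  have hπ : (0:ℝ) < π := Real.pi_pos
  rcases hmem with hθ | hθ
  · -- θ ∈ (0, 1/2), sin (2πθ) > 0
    obtain ⟨hθ0, hθ1⟩ := hθ
    have hsinpos : 0 < Real.sin (2 * π * θ) := by
      apply Real.sin_pos_of_pos_of_lt_pi <;> nlinarith
    have hApos : 0 < A 1 0 := by rw [hsign]; positivity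
    rw [phi, if_pos hApos, htrace]
    have : arccos (2 * Real.cos (2 * π * θ) / 2) = 2 * π * θ := by
      rw [mul_div_cancel_left₀ _ (two_ne_zero)]
      exact Real.arccos_cos (by nlinarith) (by nlinarith)
    rw [this]
    field_simp
  · -- θ ∈ (1/2, 1), sin (2πθ) < 0
    obtain ⟨hθ0, hθ1⟩ := hθ
    have hsinneg : Real.sin (2 * π * θ) < 0 := by
      have h1 : Real.sin (2 * π - 2 * π * θ) > 0 := by
        apply Real.sin_pos_of_pos_of_lt_pi <;> nlinarith
      rw [Real.sin_two_pi_sub] at h1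
      linarith
    have hAneg : A 1 0 < 0 := by
      rw [hsign]
      exact mul_neg_of_neg_of_pos hsinneg hfac
    rw [phi, if_neg (by linarith), htrace]
    have : arccos (2 * Real.cos (2 * π * θ) / 2) = 2 * π - 2 * π * θ := by
      rw [mul_div_cancel_left₀ _ (two_ne_zero), ← Real.cos_two_pi_sub]
      exact Real.arccos_cos (by nlinarith) (by nlinarith)
    rw [this]
    field_simp; ring


lemma exists_conj' (p q r u y θ : ℝ) (hdet' : p * u - q * r = 1) (hr : r ≠ 0) (hy : 0 < y)
    (hcos : Real.cos (2 * π * θ) = (p + u) / 2) (hsin : Real.sin (2 * π * θ) = r * y) :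
    ∃ B : Matrix (Fin 2) (Fin 2) ℝ, B.det = 1 ∧ B * !![p,q;r,u] * B⁻¹ = rot θ := by
  set a := Real.sqrt y with ha
  have hapos : 0 < a := Real.sqrt_pos.mpr hy
  have ha0 : a ≠ 0 := hapos.ne'
  have ha2 : a ^ 2 = y := Real.sq_sqrt hy.le
  have hpyth : (r*y) ^ 2 + ((p+u)/2) ^ 2 = 1 := by
    rw [← hsin, ← hcos]; exact Real.sin_sq_add_cos_sq _
  refine ⟨!![1/a, -((p-u)/(2*r))/a; 0, a], ?_, ?_⟩
  · rw [Matrix.det_fin_two]; simp; field_simp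
  · have hdetB : (!![1/a, -((p-u)/(2*r))/a; 0, a] : Matrix (Fin 2) (Fin 2) ℝ).det = 1 := by
      rw [Matrix.det_fin_two]; simp; field_simp
    have hBu : IsUnit (!![1/a, -((p-u)/(2*r))/a; 0, a] : Matrix (Fin 2) (Fin 2) ℝ).det := by
      rw [hdetB]; exact isUnit_one
    have hBA : (!![1/a, -((p-u)/(2*r))/a; 0, a] : Matrix (Fin 2) (Fin 2) ℝ) * !![p,q;r,u]
        = rot θ * !![1/a, -((p-u)/(2*r))/a; 0, a] := by
      have hpyth' : (r*a^2) ^ 2 + ((p+u)/2) ^ 2 = 1 := by rw [ha2]; exact hpyth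
      rw [rot, hcos, hsin, ← ha2, Matrix.mul_fin_two, Matrix.mul_fin_two]
      ext i j
      fin_cases i <;> fin_cases j <;>
        simp only [Matrix.cons_val', Matrix.cons_val_zero, Matrix.cons_val_one, Matrix.head_cons,
          Matrix.head_fin_const, Matrix.empty_val', Matrix.cons_val_fin_one, Matrix.of_apply, Fin.zero_eta, Fin.mk_one]
      · field_simp; ring
      · field_simp; linear_combination 4 * hpyth' - 4 * hdet'
      · field_simp; ring
      · field_simp; ring
    calc !![1/a, -((p-u)/(2*r))/a; 0, a] * !![p,q;r,u] * !![1/a, -((p-u)/(2*r))/a; 0, a]⁻¹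
        = rot θ * (!![1/a, -((p-u)/(2*r))/a; 0, a] * !![1/a, -((p-u)/(2*r))/a; 0, a]⁻¹) := by
          rw [← Matrix.mul_assoc, hBA]
      _ = rot θ := by rw [Matrix.mul_nonsing_inv _ hBu, Matrix.mul_one]

lemma rotnum_exists {A : Matrix (Fin 2) (Fin 2) ℝ} (hdet : A.det = 1) (htr : |A.trace| < 2) :
    IsRotationNumber A (phi A) := by
  have hπ : (0:ℝ) < π := Real.pi_pos
  set w := A.trace / 2 with hw
  have hw1 : -1 < w := by rw [hw]; rw [abs_lt] at htr; linarith
  have hw2 : w < 1 := by rw [hw]; rw [abs_lt] at htr; linarith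
  have harc0 : 0 < arccos w := Real.arccos_pos.mpr hw2
  have harcpi : arccos w < π := by
    rw [Real.arccos]
    linarith [Real.neg_pi_div_two_lt_arcsin.mpr hw1]
  have hr : A 1 0 ≠ 0 := r_ne_zero hdet htr
  have hdet' : A 0 0 * A 1 1 - A 0 1 * A 1 0 = 1 := by
    rw [Matrix.det_fin_two] at hdet; linarith
  have hsq : 0 < 1 - w ^ 2 := by nlinarith
  have hsqrt : 0 < Real.sqrt (1 - w ^ 2) := Real.sqrt_pos.mpr hsq
  have htr2 : (A 0 0 + A 1 1) / 2 = w := by rw [hw, Matrix.trace_fin_two]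
  rcases lt_or_gt_of_ne hr with hrn | hrp
  · -- A 1 0 < 0, θ = 1 - arccos w / (2π)
    have hphi : phi A = 1 - arccos w / (2 * π) := by rw [phi, if_neg (by linarith), ← hw]
    constructor
    · right
      rw [hphi]
      constructor
      · have : arccos w / (2 * π) < 1 / 2 := by
          rw [div_lt_iff₀ (by positivity)]
          linarith
        linarith
      · have : 0 < arccos w / (2 * π) := by positivity
        linarith
    · have h2πθ : 2 * π * (phi A) = 2 * π - arccos w := by rw [hphi]; field_simp
      have hcos : Real.cos (2 * π * phi A) = (A 0 0 + A 1 1) / 2 := by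
        rw [h2πθ, Real.cos_two_pi_sub, Real.cos_arccos hw1.le hw2.le, htr2]
      have hsin : Real.sin (2 * π * phi A) = A 1 0 * (Real.sqrt (1 - w ^ 2) / (- A 1 0)) := by
        rw [h2πθ, Real.sin_two_pi_sub, Real.sin_arccos, div_neg, mul_neg, ← mul_div_assoc,
          mul_div_cancel_left₀ _ hr]
      obtain ⟨B, hB1, hB2⟩ := exists_conj' (A 0 0) (A 0 1) (A 1 0) (A 1 1) _ _ hdet' hr
        (div_pos hsqrt (by linarith) : 0 < Real.sqrt (1 - w ^ 2) / (- A 1 0)) hcos hsin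
      exact ⟨B, hB1, by rwa [← Matrix.eta_fin_two A] at hB2⟩
  · -- A 1 0 > 0, θ = arccos w / (2π)
    have hphi : phi A = arccos w / (2 * π) := by rw [phi, if_pos hrp, ← hw]
    constructor
    · left
      rw [hphi]
      constructor
      · positivity
      · rw [div_lt_iff₀ (by positivity)]
        linarith
    · have h2πθ : 2 * π * (phi A) = arccos w := by rw [hphi]; field_simp
      have hcos : Real.cos (2 * π * phi A) = (A 0 0 + A 1 1) / 2 := by
        rw [h2πθ, Real.cos_arccos hw1.le hw2.le, htr2]
      have hsin : Real.sin (2 * π * phi A) = A 1 0 * (Real.sqrt (1 - w ^ 2) / A 1 0) := by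
        rw [h2πθ, Real.sin_arccos, ← mul_div_assoc, mul_div_cancel_left₀ _ hr]
      obtain ⟨B, hB1, hB2⟩ := exists_conj' (A 0 0) (A 0 1) (A 1 0) (A 1 1) _ _ hdet' hr
        (div_pos hsqrt hrp : 0 < Real.sqrt (1 - w ^ 2) / A 1 0) hcos hsin
      exact ⟨B, hB1, by rwa [← Matrix.eta_fin_two A] at hB2⟩

lemma Theta_eq {A : Matrix (Fin 2) (Fin 2) ℝ} (hdet : A.det = 1) (htr : |A.trace| < 2) :
    Theta A = phi A := by
  have hex : ∃ θ, IsRotationNumber A θ := ⟨phi A, rotnum_exists hdet htr⟩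
  rw [Theta, dif_pos hex]
  exact rotnum_unique hdet htr hex.choose_spec

lemma gronwall_aux {f f' : ℝ → Matrix (Fin 2) (Fin 2) ℝ} {a b δ Kc ε : ℝ}
    (hd : ∀ τ, HasDerivAt f (f' τ) τ) (h0 : ‖f a‖ ≤ δ)
    (hb : ∀ τ ∈ Set.Icc a b, ‖f' τ‖ ≤ Kc * ‖f τ‖ + ε) :
    ∀ τ ∈ Set.Icc a b, ‖f τ‖ ≤ gronwallBound δ Kc ε (τ - a) := by
  apply norm_le_gronwallBound_of_norm_deriv_right_le
  · exact Continuous.continuousOn (continuous_iff_continuousAt.mpr fun τ => (hd τ).continuousAt)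
  · exact fun x _ => (hd x).hasDerivWithinAt
  · exact h0
  · exact fun x hx => hb x ⟨hx.1, hx.2.le⟩

lemma gronwallBound_le_aux {Kc ε x D : ℝ} (hK : 2 ≤ Kc) (hε : 0 ≤ ε) (hx : 0 ≤ x)
    (hxD : x ≤ D) : gronwallBound 0 Kc ε x ≤ ε * Real.exp (Kc * D) := by
  rw [gronwallBound_of_K_ne_0 (by linarith : Kc ≠ 0)]
  have h1 : Real.exp (Kc * x) - 1 ≤ Real.exp (Kc * D) := by
    have : Real.exp (Kc * x) ≤ Real.exp (Kc * D) :=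
      Real.exp_le_exp.mpr (mul_le_mul_of_nonneg_left hxD (by linarith))
    linarith
  have h3 : 0 ≤ Real.exp (Kc * x) - 1 := by
    have : (1:ℝ) ≤ Real.exp (Kc * x) := Real.one_le_exp (by positivity)
    linarith
  have h2 : ε / Kc ≤ ε := div_le_self hε (by linarith)
  calc 0 * Real.exp (Kc * x) + ε / Kc * (Real.exp (Kc * x) - 1)
      = ε / Kc * (Real.exp (Kc * x) - 1) := by ring
    _ ≤ ε * Real.exp (Kc * D) := by
        apply mul_le_mul h2 h1 h3 hε

/-- The coefficient matrix of the transfer ODE. -/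
def Mmat (V : ℝ → ℝ) (E τ : ℝ) : Matrix (Fin 2) (Fin 2) ℝ := !![0, -E - V τ; 1, 0]

/-- The derivative of `Mmat` with respect to the energy. -/
def Nmat : Matrix (Fin 2) (Fin 2) ℝ := !![0, -1; 0, 0]

lemma Mmat_norm_le {V : ℝ → ℝ} {E τ K : ℝ} (hK : 1 ≤ K) (h : |E| + |V τ| ≤ K) :
    ‖Mmat V E τ‖ ≤ K := by
  have h1 : |(0:ℝ)| ≤ K := by simp; linarith
  have h2 : |(1:ℝ)| ≤ K := by simp; linarith
  have h3 : |-E - V τ| ≤ K := by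
    calc |-E - V τ| = |-(E + V τ)| := by ring_nf
      _ = |E + V τ| := abs_neg _
      _ ≤ |E| + |V τ| := abs_add_le _ _
      _ ≤ K := h
  exact norm_fin_two_le (by linarith) h1 h3 h2 h1

lemma Mmat_sub_norm (V : ℝ → ℝ) (E E' τ : ℝ) : ‖Mmat V E τ - Mmat V E' τ‖ ≤ |E - E'| := by
  rw [Mmat, Mmat, fin_two_sub]
  apply norm_fin_two_le (abs_nonneg _) <;> simp
  rw [show -E + E' = E' - E by ring, abs_sub_comm]

lemma Mmat_split (V : ℝ → ℝ) (E E₀ τ : ℝ) : Mmat V E τ = Mmat V E₀ τ + (E - E₀) • Nmat := by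
  rw [Mmat, Mmat, Nmat, fin_two_smul, fin_two_add]
  exact fin_two_congr (by ring) (by ring) (by ring) (by ring)

lemma Nmat_norm : ‖Nmat‖ ≤ 1 := by
  rw [Nmat]
  apply norm_fin_two_le zero_le_one <;> simp

lemma trace_mul_Nmat (B : Matrix (Fin 2) (Fin 2) ℝ) : (B * Nmat).trace = - B 1 0 := by
  rw [Nmat]
  nth_rewrite 1 [Matrix.eta_fin_two B]
  rw [Matrix.mul_fin_two, Matrix.trace_fin_two]
  simp

instance : TopologicalSpace.PseudoMetrizableSpace (Matrix (Fin 2) (Fin 2) ℝ) :=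
  inferInstanceAs (TopologicalSpace.PseudoMetrizableSpace (Fin 2 → Fin 2 → ℝ))

/-- Monotonicity of the rotation number of continuum transfer matrices (Lemma 2.1):
if `t < s` and `|tr A[V](E₀,t,s)| < 2` then `E ↦ Θ(A[V](E,t,s))` has a positive
derivative at `E₀`. -/
theorem stmt4 (V : ℝ → ℝ) (hV : Continuous V)
    (A : ℝ → ℝ → ℝ → Matrix (Fin 2) (Fin 2) ℝ) (hA : IsTransferFamily V A)
    (t s E₀ : ℝ) (hts : t < s) (htr : |(A E₀ t s).trace| < 2) :
    ∃ L : ℝ, 0 < L ∧ HasDerivAt (fun E => Theta (A E t s)) L E₀ := by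
  obtain ⟨hA1, hAdet, hAode⟩ := hA
  have hAode' : ∀ E τ, HasDerivAt (fun τ' => A E t τ') (Mmat V E τ * A E t τ) τ :=
    fun E τ => hAode E t τ
  have hAcont : ∀ E, Continuous fun τ => A E t τ := fun E =>
    continuous_iff_continuousAt.mpr fun τ => (hAode' E τ).continuousAt
  -- bound for V
  obtain ⟨CV, hCV⟩ := (isCompact_Icc (a := t) (b := s)).exists_bound_of_continuousOn hV.continuousOn
  have hCV0 : 0 ≤ CV := le_trans (norm_nonneg (V t)) (hCV t (Set.left_mem_Icc.mpr hts.le))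
  set K : ℝ := |E₀| + CV + 2 with hK
  have hK2 : 2 ≤ K := by have := abs_nonneg E₀; linarith
  have hK0 : 0 < K := by linarith
  have hK4 : 2 ≤ 2 * K := by linarith
  -- bound for M
  have hMnorm : ∀ E, |E - E₀| ≤ 1 → ∀ τ ∈ Set.Icc t s, ‖Mmat V E τ‖ ≤ K := by
    intro E hE τ hτ
    have hV' : |V τ| ≤ CV := by simpa using hCV τ hτ
    have hEb : |E| ≤ |E₀| + 1 := by
      have := abs_sub_abs_le_abs_sub E E₀
      linarith
    exact Mmat_norm_le (by linarith) (by rw [hK]; linarith)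
  -- a priori bound
  set C1 : ℝ := Real.exp (2 * K * (s - t)) with hC1
  have hC1pos : 0 < C1 := Real.exp_pos _
  have hL1 : ∀ E, |E - E₀| ≤ 1 → ∀ τ ∈ Set.Icc t s, ‖A E t τ‖ ≤ C1 := by
    intro E hE τ hτ
    have hg := gronwall_aux (f := fun τ => A E t τ) (f' := fun τ => Mmat V E τ * A E t τ)
      (hAode' E) (δ := 1) (Kc := 2 * K) (ε := 0) (a := t) (b := s)
      (by simp only [hA1]; exact norm_one_le₂)
      (fun τ hτ => by
        calc ‖Mmat V E τ * A E t τ‖ ≤ 2 * ‖Mmat V E τ‖ * ‖A E t τ‖ := norm_mul_le₂ _ _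
          _ ≤ 2 * K * ‖A E t τ‖ + 0 := by
              rw [add_zero]
              have := hMnorm E hE τ hτ
              have h0 := norm_nonneg (A E t τ)
              nlinarith)
    calc ‖A E t τ‖ ≤ gronwallBound 1 (2 * K) 0 (τ - t) := hg τ hτ
      _ = Real.exp (2 * K * (τ - t)) := by rw [gronwallBound_ε0, one_mul]
      _ ≤ C1 := Real.exp_le_exp.mpr (by nlinarith [hτ.2])
  -- Lipschitz in E
  set C2 : ℝ := 2 * C1 * Real.exp (2 * K * (s - t)) with hC2
  have hC2pos : 0 < C2 := by positivity
  have hL2 : ∀ E, |E - E₀| ≤ 1 → ∀ τ ∈ Set.Icc t s, ‖A E t τ - A E₀ t τ‖ ≤ C2 * |E - E₀| := by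
    intro E hE τ hτ
    have hg := gronwall_aux (f := fun τ => A E t τ - A E₀ t τ)
      (f' := fun τ => Mmat V E τ * A E t τ - Mmat V E₀ τ * A E₀ t τ)
      (fun τ => (hAode' E τ).sub (hAode' E₀ τ)) (δ := 0) (Kc := 2 * K)
      (ε := 2 * C1 * |E - E₀|) (a := t) (b := s)
      (by simp only [hA1]; simp)
      (fun τ hτ => by
        show ‖Mmat V E τ * A E t τ - Mmat V E₀ τ * A E₀ t τ‖
          ≤ 2 * K * ‖A E t τ - A E₀ t τ‖ + 2 * C1 * |E - E₀|
        have hid : Mmat V E τ * A E t τ - Mmat V E₀ τ * A E₀ t τ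
            = Mmat V E₀ τ * (A E t τ - A E₀ t τ) + (Mmat V E τ - Mmat V E₀ τ) * A E t τ := by
          rw [Matrix.mul_sub, Matrix.sub_mul]; abel
        rw [hid]
        calc ‖Mmat V E₀ τ * (A E t τ - A E₀ t τ) + (Mmat V E τ - Mmat V E₀ τ) * A E t τ‖
            ≤ ‖Mmat V E₀ τ * (A E t τ - A E₀ t τ)‖ + ‖(Mmat V E τ - Mmat V E₀ τ) * A E t τ‖ :=
              norm_add_le _ _
          _ ≤ 2 * ‖Mmat V E₀ τ‖ * ‖A E t τ - A E₀ t τ‖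
              + 2 * ‖Mmat V E τ - Mmat V E₀ τ‖ * ‖A E t τ‖ :=
              add_le_add (norm_mul_le₂ _ _) (norm_mul_le₂ _ _)
          _ ≤ 2 * K * ‖A E t τ - A E₀ t τ‖ + 2 * C1 * |E - E₀| := by
              have h1 := hMnorm E₀ (by simp) τ hτ
              have h2 := Mmat_sub_norm V E E₀ τ
              have h3 := hL1 E hE τ hτ
              have h4 := norm_nonneg (A E t τ - A E₀ t τ)
              have h5 := norm_nonneg (A E t τ)
              have h6 := norm_nonneg (Mmat V E τ - Mmat V E₀ τ)
              have h7 := abs_nonneg (E - E₀)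
              nlinarith)
    calc ‖A E t τ - A E₀ t τ‖ ≤ gronwallBound 0 (2 * K) (2 * C1 * |E - E₀|) (τ - t) := hg τ hτ
      _ ≤ 2 * C1 * |E - E₀| * Real.exp (2 * K * (s - t)) := by
          apply gronwallBound_le_aux hK4 (by positivity) (by linarith [hτ.1]) (by linarith [hτ.2])
      _ = C2 * |E - E₀| := by rw [hC2]; ring
  -- the variation matrix Y
  set G : ℝ → Matrix (Fin 2) (Fin 2) ℝ := fun u => inv2 (A E₀ t u) * Nmat * A E₀ t u with hG
  have hGcont : Continuous G := by
    exact ((continuous_inv2 (hAcont E₀)).matrix_mul continuous_const).matrix_mul (hAcont E₀)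
  set W : ℝ → Matrix (Fin 2) (Fin 2) ℝ := fun τ => ∫ u in t..τ, G u with hW
  have hWd : ∀ τ, HasDerivAt W (G τ) τ := fun τ =>
    intervalIntegral.integral_hasDerivAt_right (hGcont.intervalIntegrable _ _)
      (hGcont.stronglyMeasurable.stronglyMeasurableAtFilter) hGcont.continuousAt
  set Y : ℝ → Matrix (Fin 2) (Fin 2) ℝ := fun τ => A E₀ t τ * W τ with hY
  have hYd : ∀ τ, HasDerivAt Y (Mmat V E₀ τ * Y τ + Nmat * A E₀ t τ) τ := by
    intro τ
    have h := (hAode' E₀ τ).matMul (hWd τ)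
    convert h using 1
    have hinv : A E₀ t τ * inv2 (A E₀ t τ) = 1 := mul_inv2 (hAdet E₀ t τ)
    congr 1
    · rw [hY, Matrix.mul_assoc]
    · rw [hG, ← Matrix.mul_assoc, ← Matrix.mul_assoc, hinv, Matrix.one_mul]
  have hW0 : W t = 0 := by rw [hW]; simp
  have hY0 : Y t = 0 := by rw [hY]; simp [hW0]
  -- second-order estimate
  set C3 : ℝ := 2 * C2 * Real.exp (2 * K * (s - t)) with hC3
  have hC3pos : 0 < C3 := by positivity
  have hL3 : ∀ E, |E - E₀| ≤ 1 → ‖A E t s - A E₀ t s - (E - E₀) • Y s‖ ≤ C3 * |E - E₀| ^ 2 := by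
    intro E hE
    have hfd : ∀ τ, HasDerivAt (fun τ => A E t τ - A E₀ t τ - (E - E₀) • Y τ)
        (Mmat V E τ * A E t τ - Mmat V E₀ τ * A E₀ t τ
          - (E - E₀) • (Mmat V E₀ τ * Y τ + Nmat * A E₀ t τ)) τ :=
      fun τ => ((hAode' E τ).sub (hAode' E₀ τ)).sub ((hYd τ).const_smul (E - E₀))
    have hid : ∀ τ, Mmat V E τ * A E t τ - Mmat V E₀ τ * A E₀ t τ
          - (E - E₀) • (Mmat V E₀ τ * Y τ + Nmat * A E₀ t τ)
        = Mmat V E₀ τ * (A E t τ - A E₀ t τ - (E - E₀) • Y τ)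
          + (E - E₀) • (Nmat * (A E t τ - A E₀ t τ)) := by
      intro τ
      rw [Mmat_split V E E₀ τ]
      simp only [Matrix.add_mul, Matrix.mul_sub, Matrix.sub_mul, Matrix.mul_add, smul_sub,
        smul_add, Matrix.mul_smul, Matrix.smul_mul]
      abel
    have hg := gronwall_aux (f := fun τ => A E t τ - A E₀ t τ - (E - E₀) • Y τ)
      (f' := fun τ => Mmat V E τ * A E t τ - Mmat V E₀ τ * A E₀ t τ
        - (E - E₀) • (Mmat V E₀ τ * Y τ + Nmat * A E₀ t τ))
      hfd (δ := 0) (Kc := 2 * K) (ε := 2 * C2 * |E - E₀| ^ 2) (a := t) (b := s)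
      (by simp only [hA1, hY0]; simp)
      (fun τ hτ => by
        show ‖Mmat V E τ * A E t τ - Mmat V E₀ τ * A E₀ t τ
            - (E - E₀) • (Mmat V E₀ τ * Y τ + Nmat * A E₀ t τ)‖
          ≤ 2 * K * ‖A E t τ - A E₀ t τ - (E - E₀) • Y τ‖ + 2 * C2 * |E - E₀| ^ 2
        rw [hid τ]
        have hNd : ‖Nmat * (A E t τ - A E₀ t τ)‖ ≤ 2 * (C2 * |E - E₀|) := by
          calc ‖Nmat * (A E t τ - A E₀ t τ)‖ ≤ 2 * ‖Nmat‖ * ‖A E t τ - A E₀ t τ‖ :=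
                norm_mul_le₂ _ _
            _ ≤ 2 * (C2 * |E - E₀|) := by
                have h1 := hL2 E hE τ hτ
                have h2 := norm_nonneg (A E t τ - A E₀ t τ)
                have h3 := Nmat_norm
                have h4 := norm_nonneg Nmat
                nlinarith
        calc ‖Mmat V E₀ τ * (A E t τ - A E₀ t τ - (E - E₀) • Y τ)
              + (E - E₀) • (Nmat * (A E t τ - A E₀ t τ))‖
            ≤ ‖Mmat V E₀ τ * (A E t τ - A E₀ t τ - (E - E₀) • Y τ)‖
              + ‖(E - E₀) • (Nmat * (A E t τ - A E₀ t τ))‖ := norm_add_le _ _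
          _ ≤ 2 * K * ‖A E t τ - A E₀ t τ - (E - E₀) • Y τ‖ + 2 * C2 * |E - E₀| ^ 2 := by
              apply add_le_add
              · calc ‖Mmat V E₀ τ * (A E t τ - A E₀ t τ - (E - E₀) • Y τ)‖
                    ≤ 2 * ‖Mmat V E₀ τ‖ * ‖A E t τ - A E₀ t τ - (E - E₀) • Y τ‖ :=
                      norm_mul_le₂ _ _
                  _ ≤ 2 * K * ‖A E t τ - A E₀ t τ - (E - E₀) • Y τ‖ := by
                      have h1 := hMnorm E₀ (by simp) τ hτ
                      have h2 := norm_nonneg (A E t τ - A E₀ t τ - (E - E₀) • Y τ)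
                      nlinarith
              · rw [norm_smul, Real.norm_eq_abs]
                have h7 := abs_nonneg (E - E₀)
                nlinarith)
    calc ‖A E t s - A E₀ t s - (E - E₀) • Y s‖
        ≤ gronwallBound 0 (2 * K) (2 * C2 * |E - E₀| ^ 2) (s - t) :=
          hg s (Set.right_mem_Icc.mpr hts.le)
      _ ≤ 2 * C2 * |E - E₀| ^ 2 * Real.exp (2 * K * (s - t)) :=
          gronwallBound_le_aux hK4 (by positivity) (by linarith) le_rfl
      _ = C3 * |E - E₀| ^ 2 := by rw [hC3]; ring
  -- differentiability in E
  have hDeriv : HasDerivAt (fun E => A E t s) (Y s) E₀ := by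
    refine hasDerivAt_iff_isLittleO.mpr ?_
    rw [Asymptotics.isLittleO_iff]
    intro c hc
    filter_upwards [Metric.closedBall_mem_nhds E₀ (lt_min one_pos (by positivity : 0 < c / C3))]
      with E hE
    rw [Metric.mem_closedBall, Real.dist_eq] at hE
    have hE1 : |E - E₀| ≤ 1 := le_trans hE (min_le_left _ _)
    have hE2 : |E - E₀| ≤ c / C3 := le_trans hE (min_le_right _ _)
    calc ‖A E t s - A E₀ t s - (E - E₀) • Y s‖ ≤ C3 * |E - E₀| ^ 2 := hL3 E hE1
      _ = (C3 * |E - E₀|) * |E - E₀| := by ring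
      _ ≤ (C3 * (c / C3)) * |E - E₀| :=
          mul_le_mul_of_nonneg_right (mul_le_mul_of_nonneg_left hE2 hC3pos.le) (abs_nonneg _)
      _ = c * |E - E₀| := by field_simp
      _ = c * ‖E - E₀‖ := by rw [Real.norm_eq_abs]
  have hT : HasDerivAt (fun E => (A E t s).trace) ((Y s).trace) E₀ := by
    have h00 := hasDerivAt_matrix.mp hDeriv 0 0
    have h11 := hasDerivAt_matrix.mp hDeriv 1 1
    simp only [Matrix.trace_fin_two]; exact h00.add h11
  -- the trace of Y s as an integral
  have htrY : (Y s).trace = ∫ u in t..s, ((A E₀ t s) * G u).trace := by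
    set Lm : Matrix (Fin 2) (Fin 2) ℝ →ₗ[ℝ] ℝ :=
      (Matrix.traceLinearMap (Fin 2) ℝ ℝ).comp (LinearMap.mulLeft ℝ (A E₀ t s)) with hLm
    have hcc : ∫ u in t..s, Lm.toContinuousLinearMap (G u) = Lm.toContinuousLinearMap (W s) :=
      ContinuousLinearMap.intervalIntegral_comp_comm _ (hGcont.intervalIntegrable t s)
    have h2 : ∀ X : Matrix (Fin 2) (Fin 2) ℝ, Lm.toContinuousLinearMap X = (A E₀ t s * X).trace :=
      fun X => by
        simp [hLm, LinearMap.coe_toContinuousLinearMap', LinearMap.comp_apply,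
          LinearMap.mulLeft_apply]
    rw [hY]
    calc (A E₀ t s * W s).trace = Lm.toContinuousLinearMap (W s) := (h2 _).symm
      _ = ∫ u in t..s, Lm.toContinuousLinearMap (G u) := hcc.symm
      _ = ∫ u in t..s, ((A E₀ t s) * G u).trace := by simp only [h2]
  -- pointwise sign of the integrand
  have hψ : ∀ u, ((A E₀ t s) * G u).trace = -((A E₀ t u * A E₀ t s * inv2 (A E₀ t u)) 1 0) := by
    intro u
    have hassoc : (A E₀ t s) * G u = ((A E₀ t s) * inv2 (A E₀ t u) * Nmat) * A E₀ t u := by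
      rw [hG, ← Matrix.mul_assoc, ← Matrix.mul_assoc]
    rw [hassoc, Matrix.trace_mul_comm, ← Matrix.mul_assoc, ← Matrix.mul_assoc, trace_mul_Nmat]
  have hρpos : ∀ u, 0 < (A E₀ t s) 1 0 * ((A E₀ t u * A E₀ t s * inv2 (A E₀ t u)) 1 0) := by
    intro u
    rw [conj_entry]
    apply quadForm_pos
    · have := hAdet E₀ t s
      rw [Matrix.det_fin_two] at this
      linarith
    · rw [abs_lt, Matrix.trace_fin_two] at htr
      nlinarith [htr.1, htr.2]
    · exact row_ne (hAdet E₀ t u)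
  have hρcont : Continuous fun u => (A E₀ t u * A E₀ t s * inv2 (A E₀ t u)) 1 0 :=
    (((hAcont E₀).matrix_mul continuous_const).matrix_mul
      (continuous_inv2 (hAcont E₀))).matrix_elem 1 0
  -- trace value of Y s
  have hTval : (Y s).trace = -∫ u in t..s, (A E₀ t u * A E₀ t s * inv2 (A E₀ t u)) 1 0 := by
    rw [htrY]
    rw [show (fun u => ((A E₀ t s) * G u).trace)
        = fun u => -((A E₀ t u * A E₀ t s * inv2 (A E₀ t u)) 1 0) from funext hψ]
    rw [intervalIntegral.integral_neg]
  -- basic facts about the trace at E₀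
  have hdet₀ := hAdet E₀ t s
  have hr₀ : (A E₀ t s) 1 0 ≠ 0 := r_ne_zero hdet₀ htr
  set w₀ : ℝ := (A E₀ t s).trace / 2 with hw₀
  have hw1 : -1 < w₀ := by rw [hw₀]; rw [abs_lt] at htr; linarith [htr.1]
  have hw2 : w₀ < 1 := by rw [hw₀]; rw [abs_lt] at htr; linarith [htr.2]
  have hsq : 0 < 1 - w₀ ^ 2 := by nlinarith
  have hsqrt : 0 < Real.sqrt (1 - w₀ ^ 2) := Real.sqrt_pos.mpr hsq
  have harc : HasDerivAt (fun E => arccos ((A E t s).trace / 2))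
      (-(1 / Real.sqrt (1 - w₀ ^ 2)) * ((Y s).trace / 2)) E₀ :=
    (Real.hasDerivAt_arccos hw1.ne' hw2.ne).comp (h₂ := arccos) (h := fun E => (A E t s).trace / 2) E₀ (hT.div_const 2)
  have harcd : HasDerivAt (fun E => arccos ((A E t s).trace / 2) / (2 * π))
      ((-(1 / Real.sqrt (1 - w₀ ^ 2)) * ((Y s).trace / 2)) / (2 * π)) E₀ := harc.div_const _
  have hπ : (0:ℝ) < π := Real.pi_pos
  -- continuity in E for the eventual branch
  have hrc : ContinuousAt (fun E => (A E t s) 1 0) E₀ :=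
    (hasDerivAt_matrix.mp hDeriv 1 0).continuousAt
  have htc : ContinuousAt (fun E => (A E t s).trace) E₀ := hT.continuousAt
  have h2ev : ∀ᶠ E in 𝓝 E₀, |(A E t s).trace| < 2 :=
    htc.abs.eventually (eventually_lt_nhds htr)
  rcases lt_or_gt_of_ne hr₀ with hneg | hpos
  · -- (A E₀ t s) 1 0 < 0 : trace derivative is positive
    have hρneg : ∀ u, (A E₀ t u * A E₀ t s * inv2 (A E₀ t u)) 1 0 < 0 := by
      intro u
      nlinarith [hρpos u]
    have hint : (∫ u in t..s, (A E₀ t u * A E₀ t s * inv2 (A E₀ t u)) 1 0) < 0 := by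
      have := intervalIntegral.intervalIntegral_pos_of_pos_on
        (f := fun u => -((A E₀ t u * A E₀ t s * inv2 (A E₀ t u)) 1 0))
        (hρcont.neg.intervalIntegrable t s) (fun x _ => neg_pos.mpr (hρneg x)) hts
      rw [intervalIntegral.integral_neg] at this
      linarith
    have hTpos : 0 < (Y s).trace := by rw [hTval]; linarith
    have h1ev : ∀ᶠ E in 𝓝 E₀, (A E t s) 1 0 < 0 :=
      hrc.eventually (eventually_lt_nhds hneg)
    have hEv : (fun E => Theta (A E t s))
        =ᶠ[𝓝 E₀] fun E => 1 - arccos ((A E t s).trace / 2) / (2 * π) := by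
      filter_upwards [h1ev, h2ev] with E hE1 hE2
      rw [Theta_eq (hAdet E t s) hE2, phi, if_neg (not_lt.mpr hE1.le)]
    refine ⟨-((-(1 / Real.sqrt (1 - w₀ ^ 2)) * ((Y s).trace / 2)) / (2 * π)), ?_, ?_⟩
    · have h0 : 0 < 1 / Real.sqrt (1 - w₀ ^ 2) := by positivity
      have h1 : -(1 / Real.sqrt (1 - w₀ ^ 2)) * ((Y s).trace / 2) < 0 := by nlinarith
      have : (-(1 / Real.sqrt (1 - w₀ ^ 2)) * ((Y s).trace / 2)) / (2 * π) < 0 :=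
        div_neg_of_neg_of_pos h1 (by positivity)
      linarith
    · exact (harcd.const_sub 1).congr_of_eventuallyEq hEv
  · -- (A E₀ t s) 1 0 > 0 : trace derivative is negative
    have hρp : ∀ u, 0 < (A E₀ t u * A E₀ t s * inv2 (A E₀ t u)) 1 0 := by
      intro u
      nlinarith [hρpos u]
    have hint : 0 < ∫ u in t..s, (A E₀ t u * A E₀ t s * inv2 (A E₀ t u)) 1 0 :=
      intervalIntegral.intervalIntegral_pos_of_pos_on
        (hρcont.intervalIntegrable t s) (fun x _ => hρp x) hts
    have hTneg : (Y s).trace < 0 := by rw [hTval]; linarith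
    have h1ev : ∀ᶠ E in 𝓝 E₀, 0 < (A E t s) 1 0 :=
      hrc.eventually (eventually_gt_nhds hpos)
    have hEv : (fun E => Theta (A E t s))
        =ᶠ[𝓝 E₀] fun E => arccos ((A E t s).trace / 2) / (2 * π) := by
      filter_upwards [h1ev, h2ev] with E hE1 hE2
      rw [Theta_eq (hAdet E t s) hE2, phi, if_pos hE1]
    refine ⟨(-(1 / Real.sqrt (1 - w₀ ^ 2)) * ((Y s).trace / 2)) / (2 * π), ?_, ?_⟩
    · apply div_pos _ (by positivity)
      have h0 : 0 < 1 / Real.sqrt (1 - w₀ ^ 2) := by positivity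
      nlinarith
    · exact harcd.congr_of_eventuallyEq hEv
end
end

section
/- Let V : ℝ → ℝ be continuous and T-periodic, and let E ∈ Ω(V) be such that Θ(A[V](E)) is irrational. Then for every ε > 0 there exists N ∈ ℕ such that for every function ũ : ℝ → ℍ satisfying A[V](E,t,s)·ũ(t) = ũ(s) for all t,s ∈ ℝ (Möbius action), one has (1/(NT)) ∫₀^{NT} (1/Im ũ(t)) dt > (1/T) ∫₀^{T} (1/Im u[V](E,t)) dt − ε. (Lemma 2.2, with the explicit hypothesis, holding for almost every E in the spectrum, under which it is proved.) -/
open MeasureTheory Filter Real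
noncomputable section

attribute [local instance] Matrix.normedAddCommGroup Matrix.normedSpace
attribute [local instance] Classical.propDecidable

namespace S5

/-! ### 2x2 matrix helpers -/

def minv (M : Matrix (Fin 2) (Fin 2) ℝ) : Matrix (Fin 2) (Fin 2) ℝ :=
  !![M 1 1, -M 0 1; -M 1 0, M 0 0]

lemma minv_mul {M : Matrix (Fin 2) (Fin 2) ℝ} (h : M.det = 1) : minv M * M = 1 := by
  rw [Matrix.det_fin_two] at h
  ext i j
  fin_cases i <;> fin_cases j <;>
    simp [minv, Matrix.mul_apply, Fin.sum_univ_two, Matrix.one_apply] <;> linarith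

lemma mul_minv {M : Matrix (Fin 2) (Fin 2) ℝ} (h : M.det = 1) : M * minv M = 1 := by
  rw [Matrix.det_fin_two] at h
  ext i j
  fin_cases i <;> fin_cases j <;>
    simp [minv, Matrix.mul_apply, Fin.sum_univ_two, Matrix.one_apply] <;> linarith

lemma det_minv (M : Matrix (Fin 2) (Fin 2) ℝ) : (minv M).det = M.det := by
  simp [minv, Matrix.det_fin_two]; ring

/-! ### Moebius transformation lemmas -/

def mden (M : Matrix (Fin 2) (Fin 2) ℝ) (z : ℂ) : ℂ := ((M 1 0 : ℝ) : ℂ) * z + (M 1 1 : ℝ)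

lemma mden_ne_zero {M : Matrix (Fin 2) (Fin 2) ℝ} (h : M.det = 1) {z : ℂ} (hz : 0 < z.im) :
    mden M z ≠ 0 := by
  intro hc
  rcases eq_or_ne (M 1 0) 0 with h0 | h0
  · rw [Matrix.det_fin_two, h0] at h
    have h1 : (M 1 1 : ℝ) ≠ 0 := by intro hh; rw [hh] at h; simp at h
    rw [mden, h0] at hc
    simp at hc
    exact h1 (by exact_mod_cast hc)
  · have h2 : (mden M z).im = M 1 0 * z.im := by
      simp [mden, Complex.add_im, Complex.mul_im]
    rw [hc] at h2
    simp at h2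
    rcases h2 with h1 | h1
    · exact h0 h1
    · exact (ne_of_gt hz) h1

lemma moebius_im {M : Matrix (Fin 2) (Fin 2) ℝ} (h : M.det = 1) {z : ℂ} (hz : 0 < z.im) :
    (moebius M z).im = z.im / Complex.normSq (mden M z) := by
  rw [Matrix.det_fin_two] at h
  rw [moebius, Complex.div_im]
  rw [show ((M 1 0 : ℝ) : ℂ) * z + (M 1 1 : ℝ) = mden M z from rfl]
  rw [div_sub_div_same]
  congr 1
  obtain ⟨x, y⟩ := z
  simp [mden, Complex.add_im, Complex.add_re, Complex.mul_re, Complex.mul_im]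
  ring_nf
  linear_combination y * h

lemma moebius_im_pos {M : Matrix (Fin 2) (Fin 2) ℝ} (h : M.det = 1) {z : ℂ} (hz : 0 < z.im) :
    0 < (moebius M z).im := by
  rw [moebius_im h hz]
  exact div_pos hz (Complex.normSq_pos.mpr (mden_ne_zero h hz))

lemma moebius_one (z : ℂ) : moebius 1 z = z := by
  simp [moebius, Matrix.one_fin_two]

lemma moebius_mul {M N : Matrix (Fin 2) (Fin 2) ℝ} (hM : M.det = 1) (hN : N.det = 1)
    {z : ℂ} (hz : 0 < z.im) : moebius (M * N) z = moebius M (moebius N z) := by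
  have hdN := mden_ne_zero hN hz
  have hzN : 0 < (moebius N z).im := moebius_im_pos hN hz
  have hdM := mden_ne_zero hM hzN
  have hdMN : mden (M * N) z ≠ 0 := mden_ne_zero (by rw [Matrix.det_mul, hM, hN]; ring) hz
  rw [moebius, moebius, moebius] at *
  rw [mden] at hdN hdM hdMN
  simp only [Matrix.mul_apply, Fin.sum_univ_two] at hdMN ⊢
  have hn : ((M 1 0:ℝ):ℂ) * ((N 0 0:ℝ) * z + (N 0 1:ℝ)) + (M 1 1:ℝ) * ((N 1 0:ℝ) * z + (N 1 1:ℝ)) ≠ 0 := by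
    intro h; apply hdM
    rw [mul_div_assoc', div_add' _ _ _ hdN, h, zero_div]
  rw [mul_div_assoc', div_add' _ _ _ hdN, mul_div_assoc', div_add' _ _ _ hdN,
    div_div_div_cancel_right₀ hdN, div_eq_div_iff hdMN (fun h => hn (by linear_combination h))]
  push_cast
  ring

lemma normSq_lin (c d : ℝ) (w : ℂ) :
    Complex.normSq ((c:ℂ)*w + (d:ℂ)) = c^2*(w.re^2+w.im^2) + 2*c*d*w.re + d^2 := by
  simp [Complex.normSq_apply, Complex.add_re, Complex.add_im, Complex.mul_re, Complex.mul_im]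
  ring

/-! ### rotation matrices -/

lemma rot_det (θ : ℝ) : (rot θ).det = 1 := by
  simp [rot, Matrix.det_fin_two]
  nlinarith [sin_sq_add_cos_sq (2 * π * θ)]

lemma rot_zero : rot 0 = 1 := by
  ext i j; fin_cases i <;> fin_cases j <;> simp [rot, Matrix.one_apply]

lemma rot_add (a b : ℝ) : rot a * rot b = rot (a + b) := by
  ext i j
  fin_cases i <;> fin_cases j <;>
    simp [rot, Matrix.mul_apply, Fin.sum_univ_two, mul_add, cos_add, sin_add] <;> ring

@[simp] lemma rot00 (θ : ℝ) : rot θ 0 0 = Real.cos (2*π*θ) := by simp [rot]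
@[simp] lemma rot01 (θ : ℝ) : rot θ 0 1 = -Real.sin (2*π*θ) := by simp [rot]
@[simp] lemma rot10 (θ : ℝ) : rot θ 1 0 = Real.sin (2*π*θ) := by simp [rot]
@[simp] lemma rot11 (θ : ℝ) : rot θ 1 1 = Real.cos (2*π*θ) := by simp [rot]

/-! ### exponential sums -/

lemma trig_sum_bound (psi : ℝ) (hpsi : Complex.exp (psi * Complex.I) ≠ 1) (N : ℕ) :
    |∑ k ∈ Finset.range N, Real.cos (k * psi)| ≤ 2 / ‖Complex.exp (psi * Complex.I) - 1‖ ∧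
    |∑ k ∈ Finset.range N, Real.sin (k * psi)| ≤ 2 / ‖Complex.exp (psi * Complex.I) - 1‖ := by
  set z := Complex.exp (psi * Complex.I) with hz
  have hzk : ∀ k : ℕ, z ^ k = Complex.exp ((k * psi : ℝ) * Complex.I) := by
    intro k
    rw [hz, ← Complex.exp_nat_mul]
    congr 1
    push_cast; ring
  have hsum : ∑ k ∈ Finset.range N, z ^ k = (z ^ N - 1) / (z - 1) := geom_sum_eq hpsi N
  have habsz : ‖z‖ = 1 := Complex.norm_exp_ofReal_mul_I psi
  have habs : ‖∑ k ∈ Finset.range N, z ^ k‖ ≤ 2 / ‖z - 1‖ := by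
    rw [hsum, norm_div]
    apply div_le_div_of_nonneg_right
    · calc ‖z ^ N - 1‖ ≤ ‖z ^ N‖ + 1 := by
            simpa using norm_sub_le (z ^ N) 1
        _ ≤ 2 := by rw [norm_pow, habsz]; norm_num
    · positivity
  have hre : (∑ k ∈ Finset.range N, z ^ k).re = ∑ k ∈ Finset.range N, Real.cos (k * psi) := by
    rw [Complex.re_sum]
    refine Finset.sum_congr rfl fun k _ => ?_
    rw [hzk k, Complex.exp_ofReal_mul_I_re]
  have him : (∑ k ∈ Finset.range N, z ^ k).im = ∑ k ∈ Finset.range N, Real.sin (k * psi) := by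
    rw [Complex.im_sum]
    refine Finset.sum_congr rfl fun k _ => ?_
    rw [hzk k, Complex.exp_ofReal_mul_I_im]
  constructor
  · rw [← hre]; exact (Complex.abs_re_le_norm _).trans habs
  · rw [← him]; exact (Complex.abs_im_le_norm _).trans habs

/-! ### the key Birkhoff-type lower bound -/

private lemma K1bound (p q x y : ℝ) :
    |(p^2-q^2)*(x^2+y^2-1)/2 + 2*p*q*x| ≤ (p^2+q^2)*(x^2+y^2+1) := by
  rw [abs_le]
  constructor
  · nlinarith [sq_nonneg (p*x + q), sq_nonneg (p*y), sq_nonneg (q*x - p), sq_nonneg q]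
  · nlinarith [sq_nonneg (p - q*x), sq_nonneg (q*y), sq_nonneg p, sq_nonneg (q*x)]

private lemma K2bound (p q x y : ℝ) :
    |p*q*(x^2+y^2-1) + (q^2-p^2)*x| ≤ (p^2+q^2)*(x^2+y^2+1) := by
  rw [abs_le]
  constructor
  · nlinarith [sq_nonneg ((q+p)*x + (q-p)), sq_nonneg ((p+q)*y), sq_nonneg p, sq_nonneg q,
      sq_nonneg (p*x), sq_nonneg (q*x), sq_nonneg (p*y), sq_nonneg (q*y)]
  · nlinarith [sq_nonneg ((q-p)*x - (q+p)), sq_nonneg ((p-q)*y), sq_nonneg p, sq_nonneg q,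
      sq_nonneg (p*x), sq_nonneg (q*x), sq_nonneg (p*y), sq_nonneg (q*y)]

private lemma termIdentity (p q x y a : ℝ) :
    (p * Real.cos a + q * Real.sin a)^2 * (x^2+y^2)
      + 2*(p * Real.cos a + q * Real.sin a)*(-p * Real.sin a + q * Real.cos a)*x
      + (-p * Real.sin a + q * Real.cos a)^2
    = (p^2+q^2)*(x^2+y^2+1)/2
      + ((p^2-q^2)*(x^2+y^2-1)/2 + 2*p*q*x) * Real.cos (2*a)
      + (p*q*(x^2+y^2-1) + (q^2-p^2)*x) * Real.sin (2*a) := by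
  rw [Real.cos_two_mul', Real.sin_two_mul]
  linear_combination ((p^2+q^2)*(x^2+y^2+1)/2) * (Real.sin_sq_add_cos_sq a)

lemma sum_lower {N' : ℕ} (θ p q x y : ℝ) (hy : 0 < y) (S : ℝ)
    (hcos : |∑ k ∈ Finset.range N', Real.cos (k * (4*π*θ))| ≤ S)
    (hsin : |∑ k ∈ Finset.range N', Real.sin (k * (4*π*θ))| ≤ S)
    (hN : 4 * S ≤ (N':ℝ)) :
    ((N':ℝ) - 4 * S) * (p^2+q^2)
      ≤ ∑ k ∈ Finset.range N',
          ((p * Real.cos (2*π*(k*θ)) + q * Real.sin (2*π*(k*θ)))^2 * (x^2+y^2)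
           + 2*(p * Real.cos (2*π*(k*θ)) + q * Real.sin (2*π*(k*θ)))
              *(-p * Real.sin (2*π*(k*θ)) + q * Real.cos (2*π*(k*θ)))*x
           + (-p * Real.sin (2*π*(k*θ)) + q * Real.cos (2*π*(k*θ)))^2) / y := by
  have hterm : ∀ k : ℕ,
      ((p * Real.cos (2*π*(k*θ)) + q * Real.sin (2*π*(k*θ)))^2 * (x^2+y^2)
           + 2*(p * Real.cos (2*π*(k*θ)) + q * Real.sin (2*π*(k*θ)))
              *(-p * Real.sin (2*π*(k*θ)) + q * Real.cos (2*π*(k*θ)))*x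
           + (-p * Real.sin (2*π*(k*θ)) + q * Real.cos (2*π*(k*θ)))^2) / y
      = ((p^2+q^2)*(x^2+y^2+1)/2
          + ((p^2-q^2)*(x^2+y^2-1)/2 + 2*p*q*x) * Real.cos (k*(4*π*θ))
          + (p*q*(x^2+y^2-1) + (q^2-p^2)*x) * Real.sin (k*(4*π*θ)))/y := by
    intro k
    congr 1
    rw [show (k:ℝ)*(4*π*θ) = 2*(2*π*(k*θ)) by ring]
    exact termIdentity p q x y (2*π*(k*θ))
  rw [Finset.sum_congr rfl (fun k _ => hterm k), ← Finset.sum_div]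
  set A : ℝ := p^2+q^2 with hA
  set D : ℝ := x^2+y^2+1 with hD
  set K1 : ℝ := (p^2-q^2)*(x^2+y^2-1)/2 + 2*p*q*x with hK1
  set K2 : ℝ := p*q*(x^2+y^2-1) + (q^2-p^2)*x with hK2
  set Sc : ℝ := ∑ k ∈ Finset.range N', Real.cos (k*(4*π*θ)) with hSc
  set Ss : ℝ := ∑ k ∈ Finset.range N', Real.sin (k*(4*π*θ)) with hSs
  clear_value A D K1 K2 Sc Ss
  have hS : 0 ≤ S := le_trans (abs_nonneg _) hcos
  have hsplit : ∑ k ∈ Finset.range N', (A*D/2 + K1 * Real.cos (k*(4*π*θ)) + K2 * Real.sin (k*(4*π*θ)))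
      = (N':ℝ)*(A*D/2) + K1 * Sc + K2 * Ss := by
    rw [Finset.sum_add_distrib, Finset.sum_add_distrib, ← Finset.mul_sum, ← Finset.mul_sum,
      Finset.sum_const, Finset.card_range, nsmul_eq_mul, ← hSc, ← hSs]
  rw [hsplit]
  have hAnn : (0:ℝ) ≤ A := by rw [hA]; positivity
  have hDnn : (0:ℝ) ≤ D := by rw [hD]; positivity
  have hD2y : 2*y ≤ D := by rw [hD]; nlinarith [sq_nonneg (y-1), sq_nonneg x]
  have hfacnn : (0:ℝ) ≤ (N':ℝ) - 4*S := by linarith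
  have hb1 : -(A*D*S) ≤ K1 * Sc := by
    have habs : |K1 * Sc| ≤ A*D*S := by
      rw [abs_mul]
      rw [hK1, hA, hD]
      exact mul_le_mul (K1bound p q x y) (hSc ▸ hcos) (abs_nonneg _) (by positivity)
    linarith [neg_abs_le (K1 * Sc)]
  have hb2 : -(A*D*S) ≤ K2 * Ss := by
    have habs : |K2 * Ss| ≤ A*D*S := by
      rw [abs_mul]
      rw [hK2, hA, hD]
      exact mul_le_mul (K2bound p q x y) (hSs ▸ hsin) (abs_nonneg _) (by positivity)
    linarith [neg_abs_le (K2 * Ss)]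
  have hmono : A*(2*y)*((N':ℝ)-4*S) ≤ A*D*((N':ℝ)-4*S) :=
    mul_le_mul_of_nonneg_right (mul_le_mul_of_nonneg_left hD2y hAnn) hfacnn
  rw [le_div_iff₀ hy]
  calc ((N':ℝ) - 4*S)*A*y = A*(2*y)*((N':ℝ)-4*S)/2 := by ring
    _ ≤ A*D*((N':ℝ)-4*S)/2 := by linarith
    _ = (N':ℝ)*(A*D/2) - 2*(A*D*S) := by ring
    _ ≤ (N':ℝ) * (A * D / 2) + K1 * Sc + K2 * Ss := by linarith

/-! ### ODE lemmas for the transfer family -/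

lemma const_of_hasDerivAt_zero {f : ℝ → ℝ} (h : ∀ x : ℝ, HasDerivAt f 0 x) (x y : ℝ) :
    f x = f y :=
  is_const_of_deriv_eq_zero (fun z => (h z).differentiableAt) (fun z => (h z).deriv) x y

variable {V : ℝ → ℝ} {A : ℝ → ℝ → ℝ → Matrix (Fin 2) (Fin 2) ℝ}

lemma prodEntries (c : ℝ) (M : Matrix (Fin 2) (Fin 2) ℝ) :
    (!![0, c; 1, 0] * M) = !![c * M 1 0, c * M 1 1; M 0 0, M 0 1] := by
  ext i j; fin_cases i <;> fin_cases j <;> simp [Matrix.mul_apply, Fin.sum_univ_two]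

lemma dentry (hA : IsTransferFamily V A) (E t s : ℝ) (i j : Fin 2) :
    HasDerivAt (fun s' => A E t s' i j) ((!![(-E - V s) * A E t s 1 0, (-E - V s) * A E t s 1 1;
      A E t s 0 0, A E t s 0 1]) i j) s := by
  have h := hA.2.2 E t s
  rw [prodEntries] at h
  exact hasDerivAt_pi.mp (hasDerivAt_pi.mp h i) j

lemma d00 (hA : IsTransferFamily V A) (E t s : ℝ) :
    HasDerivAt (fun s' => A E t s' 0 0) ((-E - V s) * A E t s 1 0) s := by
  simpa using dentry hA E t s 0 0
lemma d01 (hA : IsTransferFamily V A) (E t s : ℝ) :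
    HasDerivAt (fun s' => A E t s' 0 1) ((-E - V s) * A E t s 1 1) s := by
  simpa using dentry hA E t s 0 1
lemma d10 (hA : IsTransferFamily V A) (E t s : ℝ) :
    HasDerivAt (fun s' => A E t s' 1 0) (A E t s 0 0) s := by
  simpa using dentry hA E t s 1 0
lemma d11 (hA : IsTransferFamily V A) (E t s : ℝ) :
    HasDerivAt (fun s' => A E t s' 1 1) (A E t s 0 1) s := by
  simpa using dentry hA E t s 1 1

lemma d0j (hA : IsTransferFamily V A) (E t s : ℝ) (j : Fin 2) :
    HasDerivAt (fun s' => A E t s' 0 j) ((-E - V s) * A E t s 1 j) s := by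
  fin_cases j
  · exact d00 hA E t s
  · exact d01 hA E t s

lemma d1j (hA : IsTransferFamily V A) (E t s : ℝ) (j : Fin 2) :
    HasDerivAt (fun s' => A E t s' 1 j) (A E t s 0 j) s := by
  fin_cases j
  · exact d10 hA E t s
  · exact d11 hA E t s

/-- fundamental constancy: if `b` solves the same linear ODE, then
`minv (A E t s) * b s` is independent of `s`. -/
lemma key_const' (hA : IsTransferFamily V A) (E t : ℝ) (b : ℝ → Matrix (Fin 2) (Fin 2) ℝ)
    (hb0 : ∀ (j : Fin 2) (x : ℝ), HasDerivAt (fun s' => b s' 0 j) ((-E - V x) * b x 1 j) x)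
    (hb1 : ∀ (j : Fin 2) (x : ℝ), HasDerivAt (fun s' => b s' 1 j) (b x 0 j) x)
    (r s : ℝ) : minv (A E t s) * b s = minv (A E t r) * b r := by
  have e0 : ∀ (j : Fin 2) (x : ℝ), HasDerivAt
      (fun s' => A E t s' 1 1 * b s' 0 j - A E t s' 0 1 * b s' 1 j) 0 x := by
    intro j x
    have h := ((d11 hA E t x).mul (hb0 j x)).sub ((d01 hA E t x).mul (hb1 j x))
    exact h.congr_deriv (by ring)
  have e1 : ∀ (j : Fin 2) (x : ℝ), HasDerivAt
      (fun s' => -A E t s' 1 0 * b s' 0 j + A E t s' 0 0 * b s' 1 j) 0 x := by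
    intro j x
    have h := (((d10 hA E t x).neg).mul (hb0 j x)).add ((d00 hA E t x).mul (hb1 j x))
    exact h.congr_deriv (by simp only [Pi.neg_apply]; ring)
  have c0 : ∀ j : Fin 2, A E t s 1 1 * b s 0 j - A E t s 0 1 * b s 1 j
      = A E t r 1 1 * b r 0 j - A E t r 0 1 * b r 1 j :=
    fun j => const_of_hasDerivAt_zero (e0 j) s r
  have c1 : ∀ j : Fin 2, -A E t s 1 0 * b s 0 j + A E t s 0 0 * b s 1 j
      = -A E t r 1 0 * b r 0 j + A E t r 0 0 * b r 1 j :=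
    fun j => const_of_hasDerivAt_zero (e1 j) s r
  ext i j
  fin_cases i <;> fin_cases j <;>
    simp [minv, Matrix.mul_apply, Fin.sum_univ_two]
  · have h := c0 0; linarith
  · have h := c0 1; linarith
  · have h := c1 0; linarith
  · have h := c1 1; linarith

lemma minv_one : minv 1 = (1 : Matrix (Fin 2) (Fin 2) ℝ) := by
  rw [Matrix.one_fin_two]
  ext i j
  fin_cases i <;> fin_cases j <;> simp [minv]

lemma key_const (hA : IsTransferFamily V A) (E t r s : ℝ) :
    minv (A E t s) * A E r s = minv (A E t r) := by
  rw [show minv (A E t r) = minv (A E t r) * A E r r by rw [hA.1 E r, mul_one]]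
  exact key_const' hA E t (fun s => A E r s) (fun j x => d0j hA E r x j) (fun j x => d1j hA E r x j) r s

lemma cocycle (hA : IsTransferFamily V A) (E t r s : ℝ) :
    A E r s * A E t r = A E t s := by
  have h := key_const hA E t r s
  have h2 : A E t s * (minv (A E t s) * A E r s) = A E t s * minv (A E t r) := by rw [h]
  rw [← mul_assoc, mul_minv (hA.2.1 E t s), one_mul] at h2
  rw [h2, mul_assoc, minv_mul (hA.2.1 E t r), mul_one]

lemma periodicA {T : ℝ} (hA : IsTransferFamily V A) (hper : Function.Periodic V T)
    (E t s : ℝ) : A E (t+T) (s+T) = A E t s := by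
  have hb0 : ∀ (j : Fin 2) (x : ℝ),
      HasDerivAt (fun s' => A E (t+T) (s'+T) 0 j) ((-E - V x) * A E (t+T) (x+T) 1 j) x := by
    intro j x
    have h := (d0j hA E (t+T) (x+T) j).comp_add_const x T
    rwa [hper x] at h
  have hb1 : ∀ (j : Fin 2) (x : ℝ),
      HasDerivAt (fun s' => A E (t+T) (s'+T) 1 j) (A E (t+T) (x+T) 0 j) x := by
    intro j x
    exact (d1j hA E (t+T) (x+T) j).comp_add_const x T
  have h := key_const' hA E t (fun s => A E (t+T) (s+T)) hb0 hb1 t s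
  simp only [hA.1] at h
  rw [mul_one, minv_one] at h
  have h2 : A E t s * (minv (A E t s) * A E (t+T) (s+T)) = A E t s * 1 := by rw [h]
  rwa [← mul_assoc, mul_minv (hA.2.1 E t s), one_mul, mul_one] at h2

lemma periodicAk {T : ℝ} (hA : IsTransferFamily V A) (hper : Function.Periodic V T)
    (E : ℝ) (k : ℕ) (t s : ℝ) : A E (t + k*T) (s + k*T) = A E t s := by
  induction k with
  | zero => simp
  | succ n ih =>
    have h1 : t + ((n:ℝ)+1)*T = (t + n*T) + T := by ring
    have h2 : s + ((n:ℝ)+1)*T = (s + n*T) + T := by ring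
    push_cast
    rw [h1, h2, periodicA hA hper, ih]

end S5

/-- Lemma 2.2: for a `T`-periodic continuum potential and an energy `E ∈ Ω(V)` with
irrational rotation number, every invariant section `ũ` of the transfer cocycle in the
upper half-plane has, over long periods, an average of `1/Im ũ` nearly bounded below by
that of the periodic invariant section `u[V](E,·)`. -/
theorem stmt5 (T : ℝ) (hT : 0 < T) (V : ℝ → ℝ) (hV : Continuous V)
    (hper : Function.Periodic V T)
    (A : ℝ → ℝ → ℝ → Matrix (Fin 2) (Fin 2) ℝ) (hA : IsTransferFamily V A)
    (E : ℝ) (hΩ : |(A E 0 T).trace| < 2)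
    (hirr : Irrational (Theta (A E 0 T)))
    (ε : ℝ) (hε : 0 < ε) :
    ∃ N : ℕ, 0 < N ∧ ∀ u : ℝ → ℂ,
      (∀ t, 0 < (u t).im) →
      (∀ t s, moebius (A E t s) (u t) = u s) →
      (1 / (N * T)) * ∫ t in (0:ℝ)..(N * T), ((u t).im)⁻¹
        > (1 / T) * (∫ t in (0:ℝ)..T, ((fixedPt (A E t (t + T))).im)⁻¹) - ε := by
  classical
  -- extract the rotation number data
  have hex : ∃ θ : ℝ, IsRotationNumber (A E 0 T) θ := by
    by_contra hno
    rw [Theta, dif_neg hno] at hirr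
    exact (Rat.not_irrational 0) (by simpa using hirr)
  set θ := hex.choose with hθdef
  have hirrθ : Irrational θ := by rwa [Theta, dif_pos hex] at hirr
  obtain ⟨hmem, B, hBdet, hconj⟩ := hex.choose_spec
  rw [← hθdef] at hconj
  have hπ := Real.pi_pos
  -- B inverse
  have hBu : IsUnit B.det := by rw [hBdet]; exact isUnit_one
  set C := B⁻¹ with hCdef
  have hBC : B * C = 1 := Matrix.mul_nonsing_inv B hBu
  have hCB : C * B = 1 := Matrix.nonsing_inv_mul B hBu
  have hCdet : C.det = 1 := by
    have h := Matrix.det_mul B C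
    rw [hBC, hBdet, Matrix.det_one] at h
    linarith
  have hg0 : A E 0 T = C * rot θ * B := by
    have h1 : C * (B * A E 0 T * C) * B = C * rot θ * B := by rw [hconj]
    calc A E 0 T = (C*B) * A E 0 T * (C*B) := by rw [hCB]; simp
      _ = C * (B * A E 0 T * C) * B := by simp only [mul_assoc]
      _ = C * rot θ * B := h1
  -- irrationality consequences
  have hsin : Real.sin (2*π*θ) ≠ 0 := by
    intro h
    rw [Real.sin_eq_zero_iff] at h
    obtain ⟨n, hn⟩ := h
    have h2 : π * (n:ℝ) = π * (2*θ) := by linarith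
    have h3 := mul_left_cancel₀ Real.pi_ne_zero h2
    exact hirrθ ⟨(n:ℚ)/2, by push_cast; linarith⟩
  have he : Complex.exp ((4*π*θ : ℝ) * Complex.I) ≠ 1 := by
    intro h
    rw [Complex.exp_eq_one_iff] at h
    obtain ⟨n, hn⟩ := h
    have h2 := congrArg Complex.im hn
    simp [Complex.mul_im] at h2
    have h3 : π * (4*θ) = π * (2*(n:ℝ)) := by push_cast at h2 ⊢; linarith
    have h4 := mul_left_cancel₀ Real.pi_ne_zero h3
    exact hirrθ ⟨(n:ℚ)/2, by push_cast; linarith⟩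
  set S := 2 / ‖Complex.exp ((4*π*θ:ℝ) * Complex.I) - 1‖ with hSdef
  have habs : 0 < ‖Complex.exp ((4*π*θ:ℝ) * Complex.I) - 1‖ := by
    rw [norm_pos_iff]
    exact sub_ne_zero.mpr he
  have hS : 0 < S := div_pos two_pos habs
  -- the matrices P and Q
  set P : ℝ → Matrix (Fin 2) (Fin 2) ℝ := fun t => A E 0 t with hPdef
  set Q : ℝ → Matrix (Fin 2) (Fin 2) ℝ := fun t => P t * C with hQdef
  have hPdet : ∀ t, (P t).det = 1 := fun t => hA.2.1 E 0 t
  have hQdet : ∀ t, (Q t).det = 1 := by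
    intro t
    rw [hQdef]
    simp only [Matrix.det_mul, hPdet t, hCdet, one_mul]
  have hBmPdet : ∀ t, (B * S5.minv (P t)).det = 1 := by
    intro t
    rw [Matrix.det_mul, S5.det_minv, hPdet t, hBdet, one_mul]
  -- the fundamental decomposition
  have hGP : ∀ (k : ℕ) (t : ℝ), A E t (t + k*T) * P t = P t * (C * rot (k*θ) * B) := by
    intro k
    induction k with
    | zero =>
      intro t
      simp only [Nat.cast_zero, zero_mul, add_zero, hA.1, one_mul, S5.rot_zero, mul_one]
      rw [hCB, mul_one]
    | succ n ih =>
      intro t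
      have harg : t + ((n:ℕ)+1:ℕ)*T = (t + (n:ℕ)*T) + T := by push_cast; ring
      have hco : A E t (t + ((n:ℕ)+1:ℕ)*T) = A E (t + (n:ℕ)*T) (t + ((n:ℕ)+1:ℕ)*T) * A E t (t + (n:ℕ)*T) :=
        (S5.cocycle hA E t (t + (n:ℕ)*T) _).symm
      have hsh : A E (t + (n:ℕ)*T) (t + ((n:ℕ)+1:ℕ)*T) = A E t (t + T) := by
        rw [harg]
        have := S5.periodicAk hA hper E n t (t+T)
        rw [show t + T + (n:ℕ)*T = t + (n:ℕ)*T + T by ring] at this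
        exact this
      have hstar : A E t (t + T) * P t = P t * (C * rot θ * B) := by
        have h1 : A E t (t+T) * A E 0 t = A E 0 (t+T) := S5.cocycle hA E 0 t (t+T)
        have h2 : A E T (t+T) * A E 0 T = A E 0 (t+T) := S5.cocycle hA E 0 T (t+T)
        have h3 : A E T (t+T) = A E 0 t := by
          have := S5.periodicA hA hper E 0 t
          rwa [zero_add] at this
        rw [← hg0]
        show A E t (t+T) * A E 0 t = A E 0 t * A E 0 T
        rw [h1, ← h2, h3]
      have e1 : A E t (t + ((n:ℕ)+1:ℕ)*T) * P t = A E t (t+T) * (A E t (t + (n:ℕ)*T) * P t) := by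
        rw [hco, hsh, mul_assoc]
      have e2 : (C * rot θ * B) * (C * rot ((n:ℕ)*θ) * B) = C * rot (((n:ℕ)+1:ℕ)*θ) * B := by
        have harg2 : θ + (n:ℝ)*θ = ((n+1:ℕ):ℝ)*θ := by push_cast; ring
        calc (C * rot θ * B) * (C * rot ((n:ℕ)*θ) * B)
            = C * (rot θ * ((B * C) * (rot ((n:ℕ)*θ) * B))) := by simp only [mul_assoc]
          _ = C * (rot θ * (rot ((n:ℕ)*θ) * B)) := by rw [hBC, one_mul]
          _ = C * (rot θ * rot ((n:ℕ)*θ)) * B := by simp only [mul_assoc]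
          _ = C * rot (θ + (n:ℝ)*θ) * B := by rw [S5.rot_add]
          _ = C * rot (((n:ℕ)+1:ℕ)*θ) * B := by rw [harg2]
      rw [e1, ih t, ← mul_assoc, hstar, mul_assoc, e2]
  have hdecomp : ∀ (t : ℝ) (k : ℕ),
      A E t (t + k*T) = (Q t * rot (k*θ)) * (B * S5.minv (P t)) := by
    intro t k
    have h := hGP k t
    have h2 : A E t (t + k*T) * P t * S5.minv (P t) = P t * (C * rot (k*θ) * B) * S5.minv (P t) := by
      rw [h]
    rw [mul_assoc, S5.mul_minv (hPdet t), mul_one] at h2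
    rw [h2, hQdef]
    simp only [mul_assoc]
  -- continuity of entries of P
  have hPcont : ∀ i j : Fin 2, Continuous fun t => P t i j := by
    intro i j
    refine continuous_iff_continuousAt.mpr fun s => ?_
    exact (S5.dentry hA E 0 s i j).continuousAt
  have hQcont : ∀ i j : Fin 2, Continuous fun t => Q t i j := by
    intro i j
    have hq : (fun t => Q t i j) = fun t => P t i 0 * C 0 j + P t i 1 * C 1 j := by
      funext t
      rw [hQdef]
      simp [Matrix.mul_apply, Fin.sum_univ_two]
    rw [hq]
    exact ((hPcont i 0).mul continuous_const).add ((hPcont i 1).mul continuous_const)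
  set A0 : ℝ → ℝ := fun t => (Q t 1 0)^2 + (Q t 1 1)^2 with hA0def
  have hA0cont : Continuous A0 := ((hQcont 1 0).pow 2).add ((hQcont 1 1).pow 2)
  have hA0pos : ∀ t, 0 < A0 t := by
    intro t
    rw [hA0def]
    by_contra hle
    push_neg at hle
    have h10 : Q t 1 0 = 0 := by nlinarith [sq_nonneg (Q t 1 0), sq_nonneg (Q t 1 1)]
    have h11 : Q t 1 1 = 0 := by nlinarith [sq_nonneg (Q t 1 0), sq_nonneg (Q t 1 1)]
    have hd := hQdet t
    rw [Matrix.det_fin_two, h10, h11] at hd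
    simp at hd
  -- identification of the fixed point
  have hrotI : moebius (rot θ) Complex.I = Complex.I := by
    have hden : S5.mden (rot θ) Complex.I ≠ 0 :=
      S5.mden_ne_zero (S5.rot_det θ) (by simp)
    rw [S5.mden, S5.rot10, S5.rot11] at hden
    rw [moebius, S5.rot00, S5.rot01, S5.rot10, S5.rot11]
    rw [div_eq_iff hden]
    push_cast
    linear_combination (-(Complex.sin (2*(π:ℂ)*(θ:ℂ)))) * Complex.I_sq
  have hfixval : ∀ t : ℝ, ((fixedPt (A E t (t + T))).im)⁻¹ = A0 t := by
    intro t
    have hBmP1 : (B * S5.minv (P t)) * Q t = 1 := by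
      show B * S5.minv (P t) * (P t * C) = 1
      calc B * S5.minv (P t) * (P t * C) = B * ((S5.minv (P t) * P t) * C) := by
            simp only [mul_assoc]
        _ = 1 := by rw [S5.minv_mul (hPdet t), one_mul, hBC]
    have hQBmP : Q t * (B * S5.minv (P t)) = 1 := by
      show P t * C * (B * S5.minv (P t)) = 1
      calc P t * C * (B * S5.minv (P t)) = P t * ((C * B) * S5.minv (P t)) := by
            simp only [mul_assoc]
        _ = 1 := by rw [hCB, one_mul, S5.mul_minv (hPdet t)]
    have hd1 : A E t (t + T) = (Q t * rot θ) * (B * S5.minv (P t)) := by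
      have h := hdecomp t 1
      rw [show t + (1:ℕ)*T = t + T by push_cast; ring] at h
      rw [show ((1:ℕ):ℝ)*θ = θ by push_cast; ring] at h
      exact h
    set zs := moebius (Q t) Complex.I with hzs
    have hzsim : 0 < zs.im := S5.moebius_im_pos (hQdet t) (by simp)
    have hQrotdet : (Q t * rot θ).det = 1 := by
      rw [Matrix.det_mul, hQdet t, S5.rot_det, one_mul]
    have hfixed : moebius (A E t (t+T)) zs = zs := by
      rw [hd1, S5.moebius_mul hQrotdet (hBmPdet t) hzsim, hzs]
      rw [← S5.moebius_mul (hBmPdet t) (hQdet t) (by simp : (0:ℝ) < Complex.I.im)]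
      rw [hBmP1, S5.moebius_one]
      rw [S5.moebius_mul (hQdet t) (S5.rot_det θ) (by simp : (0:ℝ) < Complex.I.im)]
      rw [hrotI]
    have huniq : ∀ z : ℂ, 0 < z.im → moebius (A E t (t+T)) z = z → z = zs := by
      intro z hzim hfz
      set v := moebius (B * S5.minv (P t)) z with hv
      have hvim : 0 < v.im := S5.moebius_im_pos (hBmPdet t) hzim
      have hvfix : moebius (rot θ) v = v := by
        rw [hv, ← S5.moebius_mul (S5.rot_det θ) (hBmPdet t) hzim]
        nth_rewrite 2 [← hfz]
        rw [← S5.moebius_mul (hBmPdet t) (hA.2.1 E t (t+T)) hzim]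
        congr 1
        rw [hd1]
        calc rot θ * (B * S5.minv (P t)) = 1 * (rot θ * (B * S5.minv (P t))) := by rw [one_mul]
          _ = (B * S5.minv (P t)) * (Q t * rot θ * (B * S5.minv (P t))) := by
              rw [← hBmP1]; simp only [mul_assoc]
      have hvI : v = Complex.I := by
        have hden : S5.mden (rot θ) v ≠ 0 := S5.mden_ne_zero (S5.rot_det θ) hvim
        rw [moebius, S5.rot00, S5.rot01, S5.rot10, S5.rot11] at hvfix
        rw [S5.mden, S5.rot10, S5.rot11] at hden
        rw [div_eq_iff hden] at hvfix
        push_cast at hvfix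
        have hfact : (Complex.sin (2*(π:ℂ)*(θ:ℂ))) * ((v - Complex.I) * (v + Complex.I)) = 0 := by
          linear_combination -hvfix - (Complex.sin (2*(π:ℂ)*(θ:ℂ))) * Complex.I_sq
        have hsinC : Complex.sin (2*(π:ℂ)*(θ:ℂ)) ≠ 0 := by
          have h1 : ((Real.sin (2*π*θ):ℝ):ℂ) = Complex.sin (2*(π:ℂ)*(θ:ℂ)) := by
            push_cast; ring
          rw [← h1]
          exact_mod_cast hsin
        rcases mul_eq_zero.mp hfact with h | h
        · exact absurd h hsinC
        rcases mul_eq_zero.mp h with h | h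
        · exact sub_eq_zero.mp h
        · exfalso
          have hvm : v = -Complex.I := by linear_combination h
          rw [hvm] at hvim
          simp at hvim
          linarith
      rw [hv] at hvI
      have : moebius (Q t) (moebius (B * S5.minv (P t)) z) = moebius (Q t) Complex.I := by
        rw [hvI]
      rwa [← S5.moebius_mul (hQdet t) (hBmPdet t) hzim, hQBmP, S5.moebius_one] at this
    have hex2 : ∃ z : ℂ, 0 < z.im ∧ moebius (A E t (t+T)) z = z := ⟨zs, hzsim, hfixed⟩
    rw [fixedPt, dif_pos hex2]
    rw [huniq _ hex2.choose_spec.1 hex2.choose_spec.2]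
    rw [hzs, S5.moebius_im (hQdet t) (by simp : (0:ℝ) < Complex.I.im)]
    have hnsq : Complex.normSq (S5.mden (Q t) Complex.I) = A0 t := by
      rw [S5.mden, hA0def, Complex.normSq_apply]
      simp [Complex.add_re, Complex.add_im, Complex.mul_re, Complex.mul_im]
      ring
    rw [hnsq]
    simp [ne_of_gt (hA0pos t)]
  -- positivity of the period integral
  set CA := ∫ t in (0:ℝ)..T, A0 t with hCAdef
  have hCApos : 0 < CA :=
    intervalIntegral.intervalIntegral_pos_of_pos_on (hA0cont.intervalIntegrable _ _)
      (fun x _ => hA0pos x) hT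
  have hCfix : (∫ t in (0:ℝ)..T, ((fixedPt (A E t (t + T))).im)⁻¹) = CA := by
    rw [hCAdef]
    exact intervalIntegral.integral_congr (fun t _ => hfixval t)
  -- choice of N
  set Nr : ℝ := 4*S + 4*S*CA/(T*ε) with hNrdef
  refine ⟨⌈Nr⌉₊ + 1, Nat.succ_pos _, ?_⟩
  intro u hupos hu
  set N : ℕ := ⌈Nr⌉₊ + 1 with hNdef
  have hNge : Nr < (N:ℝ) := by
    rw [hNdef]
    push_cast
    have := Nat.le_ceil Nr
    linarith
  have hterm2 : 0 ≤ 4*S*CA/(T*ε) := by positivity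
  have hN4S : 4*S ≤ (N:ℝ) := by
    rw [hNrdef] at hNge
    linarith
  have hNpos : (0:ℝ) < N := by
    rw [hNdef]
    push_cast
    positivity
  -- trig sums
  obtain ⟨hcosb, hsinb⟩ := S5.trig_sum_bound (4*π*θ) he N
  rw [← hSdef] at hcosb hsinb
  -- continuity of u
  have hucont : Continuous u := by
    have hform : u = fun t => moebius (P t) (u 0) := by
      funext t
      rw [hPdef]
      exact (hu 0 t).symm
    rw [hform]
    have hnum : Continuous fun t => ((P t 0 0 : ℝ) : ℂ) * u 0 + ((P t 0 1 : ℝ) : ℂ) :=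
      (((Complex.continuous_ofReal.comp (hPcont 0 0)).mul continuous_const).add
        (Complex.continuous_ofReal.comp (hPcont 0 1)))
    have hden : Continuous fun t => ((P t 1 0 : ℝ) : ℂ) * u 0 + ((P t 1 1 : ℝ) : ℂ) :=
      (((Complex.continuous_ofReal.comp (hPcont 1 0)).mul continuous_const).add
        (Complex.continuous_ofReal.comp (hPcont 1 1)))
    exact hnum.div hden (fun t => S5.mden_ne_zero (hPdet t) (hupos 0))
  have hφcont : Continuous fun t => ((u t).im)⁻¹ := by
    refine (Complex.continuous_im.comp hucont).inv₀ fun t => ?_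
    exact ne_of_gt (hupos t)
  -- the pointwise Birkhoff bound
  have hkey : ∀ t : ℝ, ((N:ℝ) - 4*S) * A0 t ≤ ∑ k ∈ Finset.range N, ((u (t + k*T)).im)⁻¹ := by
    intro t
    set w := moebius (B * S5.minv (P t)) (u t) with hwdef
    have hwim : 0 < w.im := S5.moebius_im_pos (hBmPdet t) (hupos t)
    have htermeq : ∀ k : ℕ, ((u (t + k*T)).im)⁻¹
        = ((Q t 1 0 * Real.cos (2*π*(k*θ)) + Q t 1 1 * Real.sin (2*π*(k*θ)))^2 * (w.re^2+w.im^2)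
           + 2*(Q t 1 0 * Real.cos (2*π*(k*θ)) + Q t 1 1 * Real.sin (2*π*(k*θ)))
              *(-(Q t 1 0) * Real.sin (2*π*(k*θ)) + Q t 1 1 * Real.cos (2*π*(k*θ)))*w.re
           + (-(Q t 1 0) * Real.sin (2*π*(k*θ)) + Q t 1 1 * Real.cos (2*π*(k*θ)))^2) / w.im := by
      intro k
      have hQrotdet : (Q t * rot (k*θ)).det = 1 := by
        rw [Matrix.det_mul, hQdet t, S5.rot_det, one_mul]
      have hueq : u (t + k*T) = moebius (Q t * rot (k*θ)) w := by
        rw [hwdef, ← S5.moebius_mul hQrotdet (hBmPdet t) (hupos t), ← hdecomp t k]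
        exact (hu t (t + k*T)).symm
      rw [hueq, S5.moebius_im hQrotdet hwim, inv_div]
      have hm10 : (Q t * rot (k*θ)) 1 0
          = Q t 1 0 * Real.cos (2*π*(k*θ)) + Q t 1 1 * Real.sin (2*π*(k*θ)) := by
        rw [rot]
        simp [Matrix.mul_apply, Fin.sum_univ_two]
      have hm11 : (Q t * rot (k*θ)) 1 1
          = -(Q t 1 0) * Real.sin (2*π*(k*θ)) + Q t 1 1 * Real.cos (2*π*(k*θ)) := by
        rw [rot]
        simp [Matrix.mul_apply, Fin.sum_univ_two]
      rw [S5.mden, hm10, hm11, S5.normSq_lin]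
    rw [Finset.sum_congr rfl (fun k _ => htermeq k)]
    rw [hA0def]
    exact S5.sum_lower θ (Q t 1 0) (Q t 1 1) w.re w.im hwim S hcosb hsinb hN4S
  -- integral manipulations
  have hIk : ∀ k : ℕ, IntervalIntegrable (fun t => ((u t).im)⁻¹) MeasureTheory.volume
      ((k:ℝ)*T) (((k:ℝ)+1)*T) := fun k => hφcont.intervalIntegrable _ _
  have hsplit : ∫ t in (0:ℝ)..((N:ℝ)*T), ((u t).im)⁻¹
      = ∑ k ∈ Finset.range N, ∫ t in ((k:ℝ)*T)..(((k:ℝ)+1)*T), ((u t).im)⁻¹ := by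
    have h := intervalIntegral.sum_integral_adjacent_intervals
      (a := fun k : ℕ => (k:ℝ)*T) (n := N) (μ := MeasureTheory.volume)
      (fun k _ => hφcont.intervalIntegrable _ _)
    have hb : ∀ k : ℕ, (((k+1:ℕ)):ℝ)*T = ((k:ℝ)+1)*T := by intro k; push_cast; ring
    calc ∫ t in (0:ℝ)..((N:ℝ)*T), ((u t).im)⁻¹
        = ∫ t in (((0:ℕ)):ℝ)*T..((N:ℝ)*T), ((u t).im)⁻¹ := by norm_num
      _ = ∑ k ∈ Finset.range N, ∫ t in ((k:ℝ)*T)..((((k+1:ℕ)):ℝ)*T), ((u t).im)⁻¹ := h.symm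
      _ = ∑ k ∈ Finset.range N, ∫ t in ((k:ℝ)*T)..(((k:ℝ)+1)*T), ((u t).im)⁻¹ :=
          Finset.sum_congr rfl fun k _ => by rw [hb k]
  have hshift : ∀ k : ℕ, ∫ t in ((k:ℝ)*T)..(((k:ℝ)+1)*T), ((u t).im)⁻¹
      = ∫ t in (0:ℝ)..T, ((u (t + k*T)).im)⁻¹ := by
    intro k
    have h2 : ∫ t in (0:ℝ)..T, ((u (t + (k:ℝ)*T)).im)⁻¹
        = ∫ t in ((0:ℝ)+(k:ℝ)*T)..(T+(k:ℝ)*T), ((u t).im)⁻¹ :=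
      intervalIntegral.integral_comp_add_right (fun t => ((u t).im)⁻¹) ((k:ℝ)*T)
    rw [h2]
    congr 1 <;> ring
  have hsum2 : ∑ k ∈ Finset.range N, ∫ t in (0:ℝ)..T, ((u (t + k*T)).im)⁻¹
      = ∫ t in (0:ℝ)..T, ∑ k ∈ Finset.range N, ((u (t + k*T)).im)⁻¹ := by
    rw [intervalIntegral.integral_finset_sum]
    intro k _
    exact (hφcont.comp (continuous_id.add continuous_const)).intervalIntegrable _ _
  have hmono : ((N:ℝ) - 4*S) * CA ≤ ∫ t in (0:ℝ)..T, ∑ k ∈ Finset.range N, ((u (t + k*T)).im)⁻¹ := by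
    rw [hCAdef, ← intervalIntegral.integral_const_mul]
    apply intervalIntegral.integral_mono_on hT.le
    · exact ((continuous_const.mul hA0cont).intervalIntegrable _ _)
    · refine Continuous.intervalIntegrable ?_ _ _
      exact continuous_finset_sum _ fun k _ =>
        hφcont.comp (continuous_id.add continuous_const)
    · exact fun x _ => hkey x
  have hchain : ((N:ℝ) - 4*S) * CA ≤ ∫ t in (0:ℝ)..((N:ℝ)*T), ((u t).im)⁻¹ := by
    rw [hsplit, Finset.sum_congr rfl (fun k _ => hshift k), hsum2]
    exact hmono
  -- final numerical computation
  rw [hCfix]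
  have hlhs : 1/((N:ℝ)*T) * (((N:ℝ) - 4*S) * CA) ≤ 1/((N:ℝ)*T) * ∫ t in (0:ℝ)..((N:ℝ)*T), ((u t).im)⁻¹ :=
    mul_le_mul_of_nonneg_left hchain (by positivity)
  have hid : 1/((N:ℝ)*T) * (((N:ℝ) - 4*S) * CA) = CA/T - 4*S*CA/((N:ℝ)*T) := by
    field_simp
  have hsmall : 4*S*CA/((N:ℝ)*T) < ε := by
    have h4 : 4*S*CA/(T*ε) < (N:ℝ) := by
      rw [hNrdef] at hNge
      linarith
    rw [div_lt_iff₀ (by positivity)] at h4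
    rw [div_lt_iff₀ (by positivity)]
    nlinarith
  have hrhs : 1/T * CA - ε < CA/T - 4*S*CA/((N:ℝ)*T) := by
    rw [one_div, inv_mul_eq_div]
    linarith
  calc (1:ℝ)/T * CA - ε < CA/T - 4*S*CA/((N:ℝ)*T) := hrhs
    _ = 1/((N:ℝ)*T) * (((N:ℝ) - 4*S) * CA) := hid.symm
    _ ≤ 1/((N:ℝ)*T) * ∫ t in (0:ℝ)..((N:ℝ)*T), ((u t).im)⁻¹ := hlhs
end
end

section
/- For every n ≥ 1 and all A₁, …, Aₙ ∈ SL(2,ℝ), one has ∫₀¹ N(Aₙ R_θ Aₙ₋₁ R_θ ⋯ A₁ R_θ) dθ = Σ_{j=1}^{n} N(A_j), where N(A) := log((‖A‖ + ‖A‖^{−1})/2). (The Parseval-type identity (2) of Section 1.1.) -/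
open Real
noncomputable section

/-- Operator norm of a 2×2 real matrix acting on the Euclidean plane. -/
def opNorm (A : Matrix (Fin 2) (Fin 2) ℝ) : ℝ := ‖Matrix.toEuclideanCLM (𝕜 := ℝ) A‖

/-- `N(A) = log((‖A‖ + ‖A‖⁻¹)/2)`. -/
def NN (A : Matrix (Fin 2) (Fin 2) ℝ) : ℝ := Real.log ((opNorm A + (opNorm A)⁻¹) / 2)


def Complex.abs : AbsoluteValue ℂ ℝ where
  toFun := fun z => ‖z‖
  map_mul' := norm_mul
  nonneg' := norm_nonneg
  eq_zero' := fun _ => norm_eq_zero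
  add_le' := norm_add_le

lemma Complex.abs_eq_norm' (z : ℂ) : Complex.abs z = ‖z‖ := rfl

lemma Complex.abs_apply (z : ℂ) : Complex.abs z = Real.sqrt (Complex.normSq z) := Complex.norm_def z

lemma Complex.abs_exp (z : ℂ) : Complex.abs (Complex.exp z) = Real.exp z.re := Complex.norm_exp z

lemma Complex.abs_mul_exp_arg_mul_I (x : ℂ) :
    (Complex.abs x : ℂ) * Complex.exp (Complex.arg x * Complex.I) = x :=
  Complex.norm_mul_exp_arg_mul_I x

@[simp] lemma Complex.abs_conj (z : ℂ) : Complex.abs ((starRingEnd ℂ) z) = Complex.abs z :=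
  Complex.norm_conj z

@[simp] lemma Complex.abs_ofReal (r : ℝ) : Complex.abs (r : ℂ) = |r| := Complex.norm_real r

lemma Complex.continuous_abs : Continuous Complex.abs := continuous_norm

lemma Complex.sq_abs (z : ℂ) : Complex.abs z ^ 2 = Complex.normSq z := Complex.sq_norm z

lemma Complex.normSq_eq_abs (z : ℂ) : Complex.normSq z = Complex.abs z ^ 2 :=
  Complex.normSq_eq_norm_sq z

@[simp] lemma Complex.abs_exp_ofReal_mul_I (x : ℝ) : Complex.abs (Complex.exp (x * Complex.I)) = 1 :=
  Complex.norm_exp_ofReal_mul_I x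

lemma Complex.re_le_abs (z : ℂ) : z.re ≤ Complex.abs z := Complex.re_le_norm z

namespace AB
open Complex

def zc (M : Matrix (Fin 2) (Fin 2) ℝ) : ℂ := ⟨(M 0 0 + M 1 1)/2, (M 1 0 - M 0 1)/2⟩

def wc (M : Matrix (Fin 2) (Fin 2) ℝ) : ℂ := ⟨(M 0 0 - M 1 1)/2, (M 0 1 + M 1 0)/2⟩

lemma zc_mul (M N : Matrix (Fin 2) (Fin 2) ℝ) :
    zc (M * N) = zc M * zc N + wc M * (starRingEnd ℂ) (wc N) := by
  simp only [zc, wc, Complex.ext_iff, Complex.mul_re, Complex.mul_im, Complex.add_re,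
    Complex.add_im, Complex.conj_re, Complex.conj_im, Matrix.mul_apply, Fin.sum_univ_two]
  constructor <;> ring

lemma wc_mul (M N : Matrix (Fin 2) (Fin 2) ℝ) :
    wc (M * N) = zc M * wc N + wc M * (starRingEnd ℂ) (zc N) := by
  simp only [zc, wc, Complex.ext_iff, Complex.mul_re, Complex.mul_im, Complex.add_re,
    Complex.add_im, Complex.conj_re, Complex.conj_im, Matrix.mul_apply, Fin.sum_univ_two]
  constructor <;> ring

lemma zc_one : zc 1 = 1 := by
  simp [zc, Complex.ext_iff, Matrix.one_apply]

lemma wc_one : wc 1 = 0 := by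
  simp [wc, Complex.ext_iff, Matrix.one_apply]

lemma normSq_zc_sub (M : Matrix (Fin 2) (Fin 2) ℝ) :
    normSq (zc M) - normSq (wc M) = M.det := by
  simp only [zc, wc, normSq_apply, Matrix.det_fin_two]
  ring

lemma zc_rot (θ : ℝ) : zc (rot θ) = Complex.exp ((2 * π * θ : ℝ) * Complex.I) := by
  rw [Complex.exp_mul_I]
  simp only [zc, rot, Complex.ext_iff, Complex.add_re, Complex.add_im, Complex.mul_re,
    Complex.mul_im, Complex.I_re, Complex.I_im, Complex.cos_ofReal_re, Complex.cos_ofReal_im,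
    Complex.sin_ofReal_re, Complex.sin_ofReal_im, Matrix.cons_val', Matrix.cons_val_zero,
    Matrix.cons_val_one, Matrix.head_cons, Matrix.head_fin_const, Matrix.empty_val',
    Matrix.cons_val_fin_one, Matrix.of_apply]
  constructor <;> ring

lemma wc_rot (θ : ℝ) : wc (rot θ) = 0 := by
  simp [wc, rot, Complex.ext_iff]

lemma det_rot (θ : ℝ) : (rot θ).det = 1 := by
  simp [rot, Matrix.det_fin_two_of]
  rw [← Real.cos_sq_add_sin_sq (2*π*θ)]; ring


-- rotation trick: |z ζ + w conj ζ| = |z| + |w| for suitable unit ζ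
lemma exists_unit_max (z w : ℂ) : ∃ ζ : ℂ, Complex.abs ζ = 1 ∧
    Complex.abs (z * ζ + w * (starRingEnd ℂ) ζ) = Complex.abs z + Complex.abs w := by
  set α := arg z
  set β := arg w
  refine ⟨Complex.exp (((β - α)/2 : ℝ) * I), by simp [Complex.abs_exp], ?_⟩
  have hz : z = (Complex.abs z : ℂ) * Complex.exp (α * I) := (Complex.abs_mul_exp_arg_mul_I z).symm
  have hw : w = (Complex.abs w : ℂ) * Complex.exp (β * I) := (Complex.abs_mul_exp_arg_mul_I w).symm
  have hconj : (starRingEnd ℂ) (Complex.exp (((β - α)/2 : ℝ) * I))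
      = Complex.exp (-(((β - α)/2 : ℝ)) * I) := by
    rw [← Complex.exp_conj]
    congr 1
    simp only [map_mul, Complex.conj_ofReal, Complex.conj_I]
    ring
  rw [hconj]
  nth_rewrite 1 [hz]
  nth_rewrite 1 [hw]
  rw [mul_assoc, mul_assoc, ← Complex.exp_add, ← Complex.exp_add]
  have e1 : (α : ℂ) * I + (((β - α)/2 : ℝ) : ℂ) * I = (((α + β)/2 : ℝ) : ℂ) * I := by
    push_cast; ring
  have e2 : (β : ℂ) * I + (-(((β - α)/2 : ℝ) : ℂ)) * I = (((α + β)/2 : ℝ) : ℂ) * I := by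
    push_cast; ring
  rw [e1, e2, ← add_mul]
  rw [map_mul, Complex.abs_exp, ← Complex.ofReal_add, Complex.abs_ofReal]
  simp [abs_of_nonneg, Complex.abs.nonneg, add_nonneg]

lemma euclid_norm (x : EuclideanSpace ℝ (Fin 2)) : ‖x‖ = Complex.abs ⟨x 0, x 1⟩ := by
  rw [EuclideanSpace.norm_eq, Complex.abs_apply, Fin.sum_univ_two]
  simp [Complex.normSq_mk, sq_abs]
  ring_nf

lemma mulVec_complex (M : Matrix (Fin 2) (Fin 2) ℝ) (x : Fin 2 → ℝ) :
    (⟨M.mulVec x 0, M.mulVec x 1⟩ : ℂ)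
      = zc M * ⟨x 0, x 1⟩ + wc M * (starRingEnd ℂ) ⟨x 0, x 1⟩ := by
  simp only [zc, wc, Complex.ext_iff, Complex.mul_re, Complex.mul_im, Complex.add_re,
    Complex.add_im, Complex.conj_re, Complex.conj_im, Matrix.mulVec, dotProduct,
    Fin.sum_univ_two]
  constructor <;> ring

lemma opNorm_eq (M : Matrix (Fin 2) (Fin 2) ℝ) :
    opNorm M = Complex.abs (zc M) + Complex.abs (wc M) := by
  apply le_antisymm
  · apply ContinuousLinearMap.opNorm_le_bound _ (by positivity)
    intro x
    have : (Matrix.toEuclideanCLM (𝕜 := ℝ) M x : Fin 2 → ℝ) = M.mulVec x := rfl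
    calc ‖Matrix.toEuclideanCLM (𝕜 := ℝ) M x‖
        = Complex.abs ⟨M.mulVec x 0, M.mulVec x 1⟩ := by
          rw [euclid_norm]; rfl
      _ = Complex.abs (zc M * ⟨x 0, x 1⟩ + wc M * (starRingEnd ℂ) ⟨x 0, x 1⟩) := by
          rw [mulVec_complex]
      _ ≤ (Complex.abs (zc M) + Complex.abs (wc M)) * ‖x‖ := by
          rw [euclid_norm]
          calc Complex.abs (zc M * ⟨x 0, x 1⟩ + wc M * (starRingEnd ℂ) ⟨x 0, x 1⟩)
              ≤ Complex.abs (zc M * ⟨x 0, x 1⟩) + Complex.abs (wc M * (starRingEnd ℂ) ⟨x 0, x 1⟩) :=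
                Complex.abs.add_le _ _
            _ = (Complex.abs (zc M) + Complex.abs (wc M)) * Complex.abs (⟨x 0, x 1⟩ : ℂ) := by
                rw [map_mul, map_mul, Complex.abs_conj]; ring
  · obtain ⟨ζ, hζ1, hζmax⟩ := exists_unit_max (zc M) (wc M)
    set x : EuclideanSpace ℝ (Fin 2) := (WithLp.equiv 2 (Fin 2 → ℝ)).symm ![ζ.re, ζ.im]
      with hxdef
    have hx0 : x 0 = ζ.re := rfl
    have hx1 : x 1 = ζ.im := rfl
    have hxe : (⟨x 0, x 1⟩ : ℂ) = ζ := by rw [hx0, hx1]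
    have hxnorm : ‖x‖ = 1 := by rw [euclid_norm, hxe, hζ1]
    have h1 : ‖Matrix.toEuclideanCLM (𝕜 := ℝ) M x‖ = Complex.abs (zc M) + Complex.abs (wc M) := by
      rw [show ‖Matrix.toEuclideanCLM (𝕜 := ℝ) M x‖ = Complex.abs ⟨M.mulVec x 0, M.mulVec x 1⟩ by
        rw [euclid_norm]; rfl]
      rw [mulVec_complex, hxe, hζmax]
    have h2 := (Matrix.toEuclideanCLM (𝕜 := ℝ) M).le_opNorm x
    rw [h1, hxnorm, mul_one] at h2
    exact h2

lemma abs_zc_ge (M : Matrix (Fin 2) (Fin 2) ℝ) (h : M.det = 1) :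
    1 ≤ Complex.abs (zc M) ∧
    Complex.abs (zc M) ^ 2 = 1 + Complex.abs (wc M) ^ 2 := by
  have h1 := normSq_zc_sub M
  rw [h] at h1
  have h2 : Complex.abs (zc M) ^ 2 = 1 + Complex.abs (wc M) ^ 2 := by
    rw [Complex.sq_abs, Complex.sq_abs]; linarith
  refine ⟨?_, h2⟩
  nlinarith [Complex.abs.nonneg (zc M), Complex.abs.nonneg (wc M), sq_nonneg (Complex.abs (wc M))]

lemma NN_eq (M : Matrix (Fin 2) (Fin 2) ℝ) (h : M.det = 1) :
    NN M = Real.log (Complex.abs (zc M)) := by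
  obtain ⟨h1, h2⟩ := abs_zc_ge M h
  set a := Complex.abs (zc M)
  set b := Complex.abs (wc M)
  have hb : 0 ≤ b := Complex.abs.nonneg _
  have hab : (a + b) * (a - b) = 1 := by nlinarith
  have hpos : 0 < a + b := by nlinarith
  have : (opNorm M)⁻¹ = a - b := by
    rw [opNorm_eq M]
    field_simp
    exact (eq_one_div_of_mul_eq_one_right hab).symm
  rw [NN, this, opNorm_eq M]
  have : (a + b + (a - b)) / 2 = a := by ring
  rw [this]


open Polynomial in
def fg : List (Matrix (Fin 2) (Fin 2) ℝ) → Polynomial ℂ × Polynomial ℂ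
  | [] => (1, 0)
  | x :: xs => (C (zc x) * (fg xs).1 + C (wc x) * X * (fg xs).2,
      C ((starRingEnd ℂ) (wc x)) * (fg xs).1 + C ((starRingEnd ℂ) (zc x)) * X * (fg xs).2)

lemma fg_repr (θ : ℝ) (L : List (Matrix (Fin 2) (Fin 2) ℝ)) :
    zc ((L.map (· * rot θ)).prod)
        = Complex.exp ((2 * π * θ : ℝ) * Complex.I) ^ L.length
          * (fg L).1.eval ((starRingEnd ℂ) (Complex.exp ((2 * π * θ : ℝ) * Complex.I)) ^ 2)
      ∧ (starRingEnd ℂ) (wc ((L.map (· * rot θ)).prod))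
        = Complex.exp ((2 * π * θ : ℝ) * Complex.I) ^ L.length
          * (fg L).2.eval ((starRingEnd ℂ) (Complex.exp ((2 * π * θ : ℝ) * Complex.I)) ^ 2) := by
  set u := Complex.exp ((2 * π * θ : ℝ) * Complex.I) with hu
  have habs : Complex.abs u = 1 := by rw [hu]; exact Complex.abs_exp_ofReal_mul_I _
  have huc : u * (starRingEnd ℂ) u = 1 := by
    rw [Complex.mul_conj, Complex.normSq_eq_abs, habs]; norm_num
  induction L with
  | nil => simp [fg, zc_one, wc_one]
  | cons x xs ih =>
    obtain ⟨ih1, ih2⟩ := ih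
    have hprod : ((x :: xs).map (· * rot θ)).prod = (x * rot θ) * (xs.map (· * rot θ)).prod := by
      simp
    have hzR : zc (x * rot θ) = zc x * u := by
      rw [zc_mul, zc_rot, wc_rot, map_zero, mul_zero, add_zero, hu]
    have hwR : wc (x * rot θ) = wc x * (starRingEnd ℂ) u := by
      rw [wc_mul, wc_rot, zc_rot, mul_zero, zero_add, hu]
    constructor
    · rw [hprod, zc_mul, hzR, hwR, ih1, ih2]
      simp only [fg, Polynomial.eval_add, Polynomial.eval_mul, Polynomial.eval_C,
        Polynomial.eval_X, List.length_cons]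
      rw [pow_succ u xs.length]
      linear_combination (-(wc x * (fg xs).2.eval ((starRingEnd ℂ) u ^ 2) * u ^ xs.length *
        (starRingEnd ℂ) u)) * huc
    · rw [hprod, wc_mul, hzR, hwR]
      simp only [map_add, map_mul, Complex.conj_conj]
      rw [ih1, ih2]
      simp only [fg, Polynomial.eval_add, Polynomial.eval_mul, Polynomial.eval_C,
        Polynomial.eval_X, List.length_cons]
      rw [pow_succ u xs.length]
      linear_combination (-((starRingEnd ℂ) (zc x) * (fg xs).2.eval ((starRingEnd ℂ) u ^ 2) *
        u ^ xs.length * (starRingEnd ℂ) u)) * huc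

lemma fg_lower (L : List (Matrix (Fin 2) (Fin 2) ℝ)) (hL : ∀ M ∈ L, M.det = 1)
    (v : ℂ) (hv : Complex.abs v ≤ 1) :
    Complex.normSq ((fg L).2.eval v) + 1 ≤ Complex.normSq ((fg L).1.eval v) := by
  have hv2 : Complex.normSq v ≤ 1 := by
    rw [Complex.normSq_eq_abs]
    nlinarith [Complex.abs.nonneg v]
  induction L with
  | nil => simp [fg]
  | cons x xs ih =>
    have hdet : Complex.normSq (zc x) - Complex.normSq (wc x) = 1 := by
      rw [normSq_zc_sub, hL x List.mem_cons_self]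
    have ih' := ih (fun M hM => hL M (List.mem_cons_of_mem x hM))
    set F := (fg xs).1.eval v with hF
    set G := (fg xs).2.eval v with hG
    have key : Complex.normSq (zc x * F + wc x * v * G)
        - Complex.normSq ((starRingEnd ℂ) (wc x) * F + (starRingEnd ℂ) (zc x) * v * G)
        = (Complex.normSq (zc x) - Complex.normSq (wc x))
          * (Complex.normSq F - Complex.normSq v * Complex.normSq G) := by
      simp only [Complex.normSq_apply, Complex.mul_re, Complex.mul_im, Complex.add_re,
        Complex.add_im, Complex.conj_re, Complex.conj_im]
      ring
    have hGnn : 0 ≤ Complex.normSq G := Complex.normSq_nonneg _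
    have hFG : 1 ≤ Complex.normSq F - Complex.normSq v * Complex.normSq G := by nlinarith
    rw [hdet, one_mul] at key
    simp only [fg, Polynomial.eval_add, Polynomial.eval_mul, Polynomial.eval_C,
      Polynomial.eval_X, ← hF, ← hG]
    linarith

lemma fg_eval_zero (L : List (Matrix (Fin 2) (Fin 2) ℝ)) :
    (fg L).1.eval 0 = (L.map zc).prod := by
  induction L with
  | nil => simp [fg]
  | cons x xs ih => simp [fg, ih]


lemma cont_logabs {F : ℝ → ℂ} (hF : Continuous F) (h0 : ∀ t, F t ≠ 0) :
    Continuous fun t => Real.log (Complex.abs (F t)) := by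
  refine continuous_iff_continuousAt.2 fun t => ?_
  exact (Real.continuousAt_log (by simpa using h0 t)).comp
    (Complex.continuous_abs.continuousAt.comp hF.continuousAt)

lemma mean_log_one_sub (c : ℂ) (hc : Complex.abs c < 1) :
    ∫ t in (0:ℝ)..(2*π), Real.log (Complex.abs (1 - c * Complex.exp (t * Complex.I))) = 0 := by
  have hne : ∀ z : ℂ, Complex.abs z ≤ 1 → 1 - c * z ∈ Complex.slitPlane := by
    intro z hz
    rw [Complex.mem_slitPlane_iff]
    left
    have h1 : Complex.abs (c * z) < 1 := by
      rw [map_mul]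
      nlinarith [Complex.abs.nonneg z, Complex.abs.nonneg c]
    have hre : (c * z).re ≤ Complex.abs (c * z) := Complex.re_le_abs _
    have : (1 - c * z).re = 1 - (c * z).re := by simp
    rw [this]
    linarith
  set g : ℂ → ℂ := fun z => Complex.log (1 - c * z) with hg
  have hdiff : DifferentiableOn ℂ g (closure (Metric.ball (0:ℂ) 1)) := by
    rw [closure_ball (0:ℂ) one_ne_zero]
    intro z hz
    have hz1 : Complex.abs z ≤ 1 := by
      simpa [Complex.dist_eq, Complex.abs_eq_norm'] using Metric.mem_closedBall.mp hz
    exact ((Complex.differentiableAt_log (hne z hz1)).comp (f := fun z => 1 - c * z) z (by fun_prop)).differentiableWithinAt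
  have key := (hdiff.diffContOnCl).circleIntegral_sub_inv_smul
    (f := g) (c := 0) (R := 1) (w := 0) (Metric.mem_ball_self one_pos)
  have hg0 : g 0 = 0 := by simp [hg]
  rw [hg0, smul_zero] at key
  have hcm : ∀ t : ℝ, circleMap 0 1 t = Complex.exp (t * Complex.I) := by
    intro t; simp [circleMap]
  have key2 : ∫ t in (0:ℝ)..(2*π), Complex.I * g (Complex.exp (t * Complex.I)) = 0 := by
    rw [← key, circleIntegral]
    apply intervalIntegral.integral_congr
    intro t _
    simp only [deriv_circleMap, hcm, sub_zero, smul_eq_mul]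
    have hexp := Complex.exp_ne_zero ((t : ℂ) * Complex.I)
    field_simp
  rw [intervalIntegral.integral_const_mul] at key2
  have key3 : ∫ t in (0:ℝ)..(2*π), g (Complex.exp (t * Complex.I)) = 0 := by
    rcases mul_eq_zero.mp key2 with h | h
    · exact absurd h Complex.I_ne_zero
    · exact h
  have hcont : Continuous fun t : ℝ => g (Complex.exp (t * Complex.I)) := by
    refine continuous_iff_continuousAt.2 fun t => ?_
    have h1 : ContinuousAt (fun t : ℝ => 1 - c * Complex.exp (t * Complex.I)) t := by fun_prop
    have h2 : ContinuousAt (fun t : ℝ => Complex.log (1 - c * Complex.exp (t * Complex.I))) t :=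
      ContinuousAt.comp (x := t) (g := Complex.log)
        (f := fun t : ℝ => 1 - c * Complex.exp (t * Complex.I))
        (continuousAt_clog (hne _ (le_of_eq (Complex.abs_exp_ofReal_mul_I t)))) h1
    exact h2
  have hint : IntervalIntegrable (fun t : ℝ => g (Complex.exp (t * Complex.I)))
      MeasureTheory.volume 0 (2*π) := hcont.intervalIntegrable _ _
  have key4 := Complex.reCLM.intervalIntegral_comp_comm hint
  rw [key3] at key4
  simp only [Complex.reCLM_apply, Complex.zero_re] at key4
  refine Eq.trans ?_ key4
  apply intervalIntegral.integral_congr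
  intro t _
  exact (Complex.log_re _).symm


lemma mean_log_root (ρ : ℂ) (hρ : 1 < Complex.abs ρ) :
    ∫ t in (0:ℝ)..(2*π), Real.log (Complex.abs (Complex.exp (t * Complex.I) - ρ))
      = 2*π*Real.log (Complex.abs ρ) := by
  have hρ0 : ρ ≠ 0 := by
    intro h; rw [h] at hρ; simp at hρ; linarith
  have hinv : Complex.abs ρ⁻¹ < 1 := by
    rw [map_inv₀]
    rw [inv_lt_one_iff₀]
    right; exact hρ
  have hne1 : ∀ t : ℝ, (1 : ℂ) - ρ⁻¹ * Complex.exp (t * Complex.I) ≠ 0 := by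
    intro t h
    have : Complex.abs (ρ⁻¹ * Complex.exp (t * Complex.I)) = 1 := by
      have := sub_eq_zero.mp h
      rw [← this]; simp
    rw [map_mul, Complex.abs_exp_ofReal_mul_I, mul_one] at this
    rw [this] at hinv; linarith
  have key := mean_log_one_sub ρ⁻¹ hinv
  have heq : ∀ t ∈ Set.uIcc (0:ℝ) (2*π),
      (fun t : ℝ => Real.log (Complex.abs (Complex.exp (t * Complex.I) - ρ))) t
      = (fun t : ℝ => Real.log (Complex.abs ρ)
          + Real.log (Complex.abs (1 - ρ⁻¹ * Complex.exp (t * Complex.I)))) t := by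
    intro t _
    simp only
    rw [← Real.log_mul (by simpa using hρ0) (by simpa [sub_eq_zero] using hne1 t), ← map_mul]
    congr 1
    rw [show ρ * (1 - ρ⁻¹ * Complex.exp (t * Complex.I))
        = -(Complex.exp (t * Complex.I) - ρ) by field_simp; ring, map_neg_eq_map]
  rw [intervalIntegral.integral_congr heq,
    intervalIntegral.integral_add (intervalIntegrable_const)
      ((cont_logabs (by fun_prop) hne1).intervalIntegrable _ _),
    key, intervalIntegral.integral_const]
  simp

open Polynomial in
lemma poly_mean : ∀ (n : ℕ) (f : Polynomial ℂ), f.natDegree = n →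
    (∀ v : ℂ, Complex.abs v ≤ 1 → f.eval v ≠ 0) →
    ∫ t in (0:ℝ)..(2*π), Real.log (Complex.abs (f.eval (Complex.exp (t * Complex.I))))
      = 2*π*Real.log (Complex.abs (f.eval 0)) := by
  intro n
  induction n using Nat.strong_induction_on with
  | _ n ih =>
    intro f hdeg hf
    by_cases h0 : f.natDegree = 0
    · obtain ⟨a, ha⟩ := Polynomial.natDegree_eq_zero.mp h0
      rw [← ha]
      simp only [Polynomial.eval_C, intervalIntegral.integral_const, smul_eq_mul]
      ring
    · obtain ⟨ρ, hρ⟩ := IsAlgClosed.exists_root f (by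
        intro h
        exact h0 (Polynomial.natDegree_eq_zero_iff_degree_le_zero.mpr (le_of_eq h)))
      have hρabs : 1 < Complex.abs ρ := by
        by_contra h
        push_neg at h
        exact hf ρ h hρ
      set q := f /ₘ (X - C ρ) with hqdef
      have hfq : (X - C ρ) * q = f := Polynomial.mul_divByMonic_eq_iff_isRoot.mpr hρ
      have heval : ∀ v : ℂ, f.eval v = (v - ρ) * q.eval v := by
        intro v
        rw [← hfq]; simp
      have hq0 : ∀ v : ℂ, Complex.abs v ≤ 1 → q.eval v ≠ 0 := by
        intro v hv h
        exact hf v hv (by rw [heval v, h, mul_zero])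
      have hqne : q ≠ 0 := by
        intro h
        exact hq0 0 (by simp) (by rw [h]; simp)
      have hdq : q.natDegree = n - 1 := by
        have := Polynomial.natDegree_mul (p := X - C ρ) (q := q) (by
          exact Polynomial.X_sub_C_ne_zero ρ) hqne
        rw [hfq, Polynomial.natDegree_X_sub_C, hdeg] at this
        omega
      have hlt : n - 1 < n := by omega
      have ihq := ih (n-1) hlt q hdq hq0
      have hcirc : ∀ t : ℝ, Complex.abs (Complex.exp (t * Complex.I)) ≤ 1 :=
        fun t => le_of_eq (Complex.abs_exp_ofReal_mul_I t)
      have hne2 : ∀ t : ℝ, Complex.exp (t * Complex.I) - ρ ≠ 0 := by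
        intro t h
        rw [sub_eq_zero] at h
        rw [← h, Complex.abs_exp_ofReal_mul_I] at hρabs
        linarith
      have hρ0 : ρ ≠ 0 := by
        intro h; rw [h] at hρabs; simp at hρabs; linarith
      have heq : ∀ t ∈ Set.uIcc (0:ℝ) (2*π),
          (fun t : ℝ => Real.log (Complex.abs (f.eval (Complex.exp (t * Complex.I))))) t
          = (fun t : ℝ => Real.log (Complex.abs (Complex.exp (t * Complex.I) - ρ))
              + Real.log (Complex.abs (q.eval (Complex.exp (t * Complex.I))))) t := by
        intro t _
        simp only
        rw [heval, map_mul,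
          Real.log_mul (by simpa [sub_eq_zero] using hne2 t) (by simpa using hq0 _ (hcirc t))]
      rw [intervalIntegral.integral_congr heq,
        intervalIntegral.integral_add
          ((cont_logabs (by fun_prop) hne2).intervalIntegrable _ _)
          ((cont_logabs (F := fun t => q.eval (Complex.exp (t * Complex.I)))
            (by fun_prop) (fun t => hq0 _ (hcirc t))).intervalIntegrable _ _),
        mean_log_root ρ hρabs, ihq, heval 0, map_mul, Real.log_mul]
      · rw [zero_sub, map_neg_eq_map]
        ring
      · simpa using hρ0
      · simpa using hq0 0 (by simp)


lemma det_prod_one (θ : ℝ) (L : List (Matrix (Fin 2) (Fin 2) ℝ)) (hL : ∀ M ∈ L, M.det = 1) :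
    ((L.map (· * rot θ)).prod).det = 1 := by
  induction L with
  | nil => simp
  | cons x xs ih =>
    have h1 := hL x List.mem_cons_self
    have h2 := ih (fun M hM => hL M (List.mem_cons_of_mem x hM))
    simp only [List.map_cons, List.prod_cons, Matrix.det_mul, det_rot, h1, h2]
    ring

lemma fg_ne_zero (L : List (Matrix (Fin 2) (Fin 2) ℝ)) (hL : ∀ M ∈ L, M.det = 1)
    (v : ℂ) (hv : Complex.abs v ≤ 1) : (fg L).1.eval v ≠ 0 := by
  intro h
  have := fg_lower L hL v hv
  rw [h] at this
  simp at this
  nlinarith [Complex.normSq_nonneg ((fg L).2.eval v)]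

lemma NN_prod_eq (θ : ℝ) (L : List (Matrix (Fin 2) (Fin 2) ℝ)) (hL : ∀ M ∈ L, M.det = 1) :
    NN ((L.map (· * rot θ)).prod)
      = Real.log (Complex.abs ((fg L).1.eval (Complex.exp ((-(4*π)*θ : ℝ) * Complex.I)))) := by
  rw [NN_eq _ (det_prod_one θ L hL), (fg_repr θ L).1]
  have hv : (starRingEnd ℂ) (Complex.exp ((2 * π * θ : ℝ) * Complex.I)) ^ 2
      = Complex.exp ((-(4*π)*θ : ℝ) * Complex.I) := by
    rw [← Complex.exp_conj]
    have : (starRingEnd ℂ) (((2 * π * θ : ℝ) : ℂ) * Complex.I)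
        = ((-(2 * π * θ) : ℝ) : ℂ) * Complex.I := by
      simp only [map_mul, Complex.conj_ofReal, Complex.conj_I]
      push_cast
      ring
    rw [this, ← Complex.exp_nat_mul]
    congr 1
    push_cast
    ring
  rw [hv, map_mul, map_pow, Complex.abs_exp_ofReal_mul_I, one_pow, one_mul]

lemma sum_NN (L : List (Matrix (Fin 2) (Fin 2) ℝ)) (hL : ∀ M ∈ L, M.det = 1) :
    1 ≤ Complex.abs ((L.map zc).prod)
      ∧ Real.log (Complex.abs ((L.map zc).prod)) = (L.map NN).sum := by
  induction L with
  | nil => simp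
  | cons x xs ih =>
    have h1 := hL x List.mem_cons_self
    obtain ⟨ih1, ih2⟩ := ih (fun M hM => hL M (List.mem_cons_of_mem x hM))
    have hz1 := (abs_zc_ge x h1).1
    simp only [List.map_cons, List.prod_cons, map_mul, List.sum_cons]
    constructor
    · nlinarith
    · rw [Real.log_mul (by linarith) (by linarith), NN_eq x h1, ih2]


lemma mean_comp (G : ℝ → ℝ) (hG : Continuous G) (hper : Function.Periodic G (2*π)) :
    ∫ θ in (0:ℝ)..1, G (-(4*π)*θ) = (1/(2*π)) * ∫ t in (0:ℝ)..(2*π), G t := by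
  have hpi := Real.pi_pos
  have h4 : (-(4*π)) ≠ 0 := ne_of_lt (by nlinarith)
  rw [intervalIntegral.integral_comp_mul_left G h4]
  rw [show -(4*π) * 0 = 0 by ring, show -(4*π) * 1 = -(4*π) by ring]
  have hint : ∀ a b : ℝ, IntervalIntegrable G MeasureTheory.volume a b :=
    fun a b => hG.intervalIntegrable a b
  have hsplit : (∫ x in (-(4*π))..(-(2*π)), G x) + (∫ x in (-(2*π))..0, G x)
      = ∫ x in (-(4*π))..0, G x :=
    intervalIntegral.integral_add_adjacent_intervals (hint _ _) (hint _ _)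
  have hA : ∫ x in (-(4*π))..(-(2*π)), G x = ∫ x in (0:ℝ)..(2*π), G x := by
    have h := hper.intervalIntegral_add_eq (-(4*π)) 0
    rw [show -(4*π) + 2*π = -(2*π) by ring, zero_add] at h
    exact h
  have hB : ∫ x in (-(2*π))..0, G x = ∫ x in (0:ℝ)..(2*π), G x := by
    have h := hper.intervalIntegral_add_eq (-(2*π)) 0
    rw [show -(2*π) + 2*π = 0 by ring, zero_add] at h
    exact h
  rw [intervalIntegral.integral_symm, ← hsplit, hA, hB, smul_eq_mul]
  field_simp
  ring


end AB

/-- The Parseval-type identity: for `A₁, …, Aₙ ∈ SL(2,ℝ)`,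
`∫₀¹ N(Aₙ R_θ ⋯ A₁ R_θ) dθ = Σ N(A_j)`. -/
theorem stmt17 (n : ℕ) (hn : 1 ≤ n) (A : Fin n → Matrix (Fin 2) (Fin 2) ℝ)
    (hA : ∀ j, (A j).det = 1) :
    ∫ θ in (0:ℝ)..1, NN ((List.ofFn fun j : Fin n => A j * rot θ).reverse.prod)
      = ∑ j : Fin n, NN (A j) := by
  classical
  set L : List (Matrix (Fin 2) (Fin 2) ℝ) := (List.ofFn A).reverse with hLdef
  have hmem : ∀ M ∈ L, M.det = 1 := by
    intro M hM
    rw [hLdef, List.mem_reverse, List.mem_ofFn] at hM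
    obtain ⟨j, rfl⟩ := hM
    exact hA j
  have hrev : ∀ θ : ℝ, (List.ofFn fun j : Fin n => A j * rot θ).reverse
      = L.map (· * rot θ) := by
    intro θ
    rw [show (List.ofFn fun j : Fin n => A j * rot θ) = (List.ofFn A).map (· * rot θ) from
      (List.map_ofFn (f := A) (g := (· * rot θ))).symm, ← List.map_reverse]
  set f := (AB.fg L).1 with hfdef
  have hfne : ∀ v : ℂ, Complex.abs v ≤ 1 → f.eval v ≠ 0 := AB.fg_ne_zero L hmem
  set G : ℝ → ℝ := fun t => Real.log (Complex.abs (f.eval (Complex.exp ((t:ℝ) * Complex.I))))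
    with hGdef
  have hGcont : Continuous G :=
    AB.cont_logabs (by fun_prop) (fun t => hfne _ (le_of_eq (Complex.abs_exp_ofReal_mul_I t)))
  have hGper : Function.Periodic G (2*π) := by
    intro t
    have h : ((t + 2*π : ℝ) : ℂ) * Complex.I = (t:ℝ) * Complex.I + 2*(π:ℂ)*Complex.I := by
      push_cast; ring
    simp only [hGdef, h, Complex.exp_add, Complex.exp_two_pi_mul_I, mul_one]
  calc ∫ θ in (0:ℝ)..1, NN ((List.ofFn fun j : Fin n => A j * rot θ).reverse.prod)
      = ∫ θ in (0:ℝ)..1, G (-(4*π)*θ) := by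
        apply intervalIntegral.integral_congr
        intro θ _
        simp only
        rw [hrev θ]
        exact AB.NN_prod_eq θ L hmem
    _ = (1/(2*π)) * ∫ t in (0:ℝ)..(2*π), G t := AB.mean_comp G hGcont hGper
    _ = (1/(2*π)) * (2*π*Real.log (Complex.abs (f.eval 0))) := by
        rw [AB.poly_mean f.natDegree f rfl hfne]
    _ = Real.log (Complex.abs (f.eval 0)) := by
        have := Real.pi_ne_zero
        field_simp
    _ = (L.map NN).sum := by
        rw [hfdef, AB.fg_eval_zero L]
        exact (AB.sum_NN L hmem).2
    _ = ∑ j : Fin n, NN (A j) := by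
        rw [hLdef, List.map_reverse, List.sum_reverse, List.map_ofFn, List.sum_ofFn]
        rfl
end
end

section
/- Let x, y ∈ SL(2,ℝ), let v ∈ ℝ² be a unit eigenvector of yᵀy with eigenvalue ‖y‖^{−2} (a contracting eigendirection of yᵀy), and let w ∈ ℝ² be a unit eigenvector of x xᵀ with eigenvalue ‖x‖² (an expanding eigendirection of x xᵀ). Then ‖yx‖ ≥ ‖y‖·‖x‖·|sin ω|, where ω is the angle between v and w, i.e. |sin ω| = √(1 − ⟨v,w⟩²). (The matrix-product lower bound stated in Section 1.2.) -/
open Real Matrix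
open scoped RealInnerProductSpace
noncomputable section

lemma euclid_apply (A : Matrix (Fin 2) (Fin 2) ℝ) (p : EuclideanSpace ℝ (Fin 2)) (i : Fin 2) :
    (Matrix.toEuclideanCLM (𝕜 := ℝ) A p) i = A i 0 * p 0 + A i 1 * p 1 := by
  have h := congrFun (Matrix.ofLp_toEuclideanCLM A p) i
  simpa [Matrix.toLin'_apply, Matrix.mulVec, dotProduct, Fin.sum_univ_two] using h

lemma euclid_inner (p q : EuclideanSpace ℝ (Fin 2)) : ⟪p, q⟫ = p 0 * q 0 + p 1 * q 1 := by
  simp [PiLp.inner_apply, RCLike.inner_apply, Fin.sum_univ_two]; ring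

set_option maxHeartbeats 1000000 in
/-- If `v` is a unit eigenvector of `yᵀy` for the eigenvalue `‖y‖⁻²` and `w` is a unit
eigenvector of `xxᵀ` for the eigenvalue `‖x‖²`, then `‖yx‖ ≥ ‖y‖·‖x‖·|sin ω|` where `ω` is
the angle between `v` and `w`. -/
theorem stmt18 (x y : Matrix (Fin 2) (Fin 2) ℝ) (hx : x.det = 1) (hy : y.det = 1)
    (v w : EuclideanSpace ℝ (Fin 2)) (hv : ‖v‖ = 1) (hw : ‖w‖ = 1)
    (hvy : Matrix.toEuclideanCLM (𝕜 := ℝ) (yᵀ * y) v = ((opNorm y) ^ 2)⁻¹ • v)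
    (hwx : Matrix.toEuclideanCLM (𝕜 := ℝ) (x * xᵀ) w = ((opNorm x) ^ 2) • w) :
    opNorm (y * x) ≥ opNorm y * opNorm x * Real.sqrt (1 - ⟪v, w⟫ ^ 2) := by
  set a := opNorm x with ha
  set b := opNorm y with hb
  -- positivity of norms
  have hxne : Matrix.toEuclideanCLM (𝕜 := ℝ) x ≠ 0 := by
    intro h
    have : x = 0 := by
      rw [← StarAlgEquiv.symm_apply_apply (Matrix.toEuclideanCLM (𝕜 := ℝ) (n := Fin 2)) x, h,
        map_zero]
    rw [this] at hx; simp at hx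
  have hyne : Matrix.toEuclideanCLM (𝕜 := ℝ) y ≠ 0 := by
    intro h
    have : y = 0 := by
      rw [← StarAlgEquiv.symm_apply_apply (Matrix.toEuclideanCLM (𝕜 := ℝ) (n := Fin 2)) y, h,
        map_zero]
    rw [this] at hy; simp at hy
  have ha0 : 0 < a := by
    rcases (norm_nonneg (Matrix.toEuclideanCLM (𝕜 := ℝ) x)).lt_or_eq with h | h
    · exact h
    · exact absurd ((ContinuousLinearMap.opNorm_zero_iff _).mp h.symm) hxne
  have hb0 : 0 < b := by
    rcases (norm_nonneg (Matrix.toEuclideanCLM (𝕜 := ℝ) y)).lt_or_eq with h | h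
    · exact h
    · exact absurd ((ContinuousLinearMap.opNorm_zero_iff _).mp h.symm) hyne
  -- coordinate facts
  have hv2 : v 0 ^ 2 + v 1 ^ 2 = 1 := by
    have h1 : ⟪v, v⟫ = 1 := by rw [real_inner_self_eq_norm_sq, hv]; norm_num
    rw [euclid_inner] at h1; linear_combination h1
  have hw2 : w 0 ^ 2 + w 1 ^ 2 = 1 := by
    have h1 : ⟪w, w⟫ = 1 := by rw [real_inner_self_eq_norm_sq, hw]; norm_num
    rw [euclid_inner] at h1; linear_combination h1
  rw [Matrix.det_fin_two] at hx hy
  have hE : ∀ i, (y 0 i * y 0 0 + y 1 i * y 1 0) * v 0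
      + (y 0 i * y 0 1 + y 1 i * y 1 1) * v 1 = (b ^ 2)⁻¹ * v i := by
    intro i
    have h : (Matrix.toEuclideanCLM (𝕜 := ℝ) (yᵀ * y) v) i = (((b) ^ 2)⁻¹ • v) i := by rw [hvy]
    rw [euclid_apply] at h
    simpa [Matrix.mul_apply, Fin.sum_univ_two, Matrix.transpose_apply, smul_eq_mul] using h
  have hF : ∀ i, (x i 0 * x 0 0 + x i 1 * x 0 1) * w 0
      + (x i 0 * x 1 0 + x i 1 * x 1 1) * w 1 = a ^ 2 * w i := by
    intro i
    have h : (Matrix.toEuclideanCLM (𝕜 := ℝ) (x * xᵀ) w) i = ((a ^ 2) • w) i := by rw [hwx]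
    rw [euclid_apply] at h
    simpa [Matrix.mul_apply, Fin.sum_univ_two, Matrix.transpose_apply, smul_eq_mul] using h
  -- the vector u' = xᵀ w
  set u' : EuclideanSpace ℝ (Fin 2) := Matrix.toEuclideanCLM (𝕜 := ℝ) xᵀ w with hu'
  have hu'0 : u' 0 = x 0 0 * w 0 + x 1 0 * w 1 := by
    rw [hu', euclid_apply]; simp [Matrix.transpose_apply]
  have hu'1 : u' 1 = x 0 1 * w 0 + x 1 1 * w 1 := by
    rw [hu', euclid_apply]; simp [Matrix.transpose_apply]
  have hnu : ‖u'‖ ^ 2 = a ^ 2 := by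
    rw [← real_inner_self_eq_norm_sq, euclid_inner, hu'0, hu'1]
    linear_combination w 0 * hF 0 + w 1 * hF 1 + a ^ 2 * hw2
  have hnu' : ‖u'‖ = a := by
    nlinarith [norm_nonneg u', ha0]
  -- (y*x) u' = a^2 • (Y w)
  have hXu : (Matrix.toEuclideanCLM (𝕜 := ℝ) x) u' = (a ^ 2) • w := by
    rw [hu', show (Matrix.toEuclideanCLM (𝕜 := ℝ) x) ((Matrix.toEuclideanCLM (𝕜 := ℝ) xᵀ) w)
      = (Matrix.toEuclideanCLM (𝕜 := ℝ) (x * xᵀ)) w from by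
        rw [_root_.map_mul]; rfl, hwx]
  have hYX : Matrix.toEuclideanCLM (𝕜 := ℝ) (y * x) u'
      = (a ^ 2) • (Matrix.toEuclideanCLM (𝕜 := ℝ) y w) := by
    rw [_root_.map_mul, ContinuousLinearMap.mul_apply, hXu]
    exact ContinuousLinearMap.map_smul _ _ _
  -- norm of Y v
  set Yv := Matrix.toEuclideanCLM (𝕜 := ℝ) y v with hYv
  set Yw := Matrix.toEuclideanCLM (𝕜 := ℝ) y w with hYw
  have hYv0 : Yv 0 = y 0 0 * v 0 + y 0 1 * v 1 := by rw [hYv, euclid_apply]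
  have hYv1 : Yv 1 = y 1 0 * v 0 + y 1 1 * v 1 := by rw [hYv, euclid_apply]
  have hYw0 : Yw 0 = y 0 0 * w 0 + y 0 1 * w 1 := by rw [hYw, euclid_apply]
  have hYw1 : Yw 1 = y 1 0 * w 0 + y 1 1 * w 1 := by rw [hYw, euclid_apply]
  have hpv : Yv 0 ^ 2 + Yv 1 ^ 2 = (b ^ 2)⁻¹ := by
    rw [hYv0, hYv1]
    linear_combination v 0 * hE 0 + v 1 * hE 1 + (b ^ 2)⁻¹ * hv2
  set c := ⟪v, w⟫ with hc
  have hcc : c = v 0 * w 0 + v 1 * w 1 := by rw [hc, euclid_inner]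
  have hcross : Yv 0 * Yw 1 - Yv 1 * Yw 0 = v 0 * w 1 - v 1 * w 0 := by
    rw [hYv0, hYv1, hYw0, hYw1]
    linear_combination (v 0 * w 1 - v 1 * w 0) * hy
  have hc2 : (v 0 * w 1 - v 1 * w 0) ^ 2 = 1 - c ^ 2 := by
    rw [hcc]; nlinarith [hv2, hw2]
  have h1c : 0 ≤ 1 - c ^ 2 := hc2 ▸ sq_nonneg _
  -- lower bound on ‖Y w‖
  have hYwsq : b ^ 2 * (1 - c ^ 2) ≤ ‖Yw‖ ^ 2 := by
    have hlag : (Yv 0 ^ 2 + Yv 1 ^ 2) * (Yw 0 ^ 2 + Yw 1 ^ 2)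
        = (Yv 0 * Yw 0 + Yv 1 * Yw 1) ^ 2 + (Yv 0 * Yw 1 - Yv 1 * Yw 0) ^ 2 := by ring
    have hwn : ‖Yw‖ ^ 2 = Yw 0 ^ 2 + Yw 1 ^ 2 := by
      rw [← real_inner_self_eq_norm_sq, euclid_inner]; ring
    rw [hwn]
    have h1 : (b ^ 2)⁻¹ * (Yw 0 ^ 2 + Yw 1 ^ 2) ≥ 1 - c ^ 2 := by
      rw [← hpv, hlag, hcross, hc2]
      nlinarith [sq_nonneg (Yv 0 * Yw 0 + Yv 1 * Yw 1)]
    have hb2 : (0:ℝ) < b ^ 2 := by positivity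
    calc b ^ 2 * (1 - c ^ 2) ≤ b ^ 2 * ((b ^ 2)⁻¹ * (Yw 0 ^ 2 + Yw 1 ^ 2)) := by
          exact mul_le_mul_of_nonneg_left h1 (le_of_lt hb2)
      _ = Yw 0 ^ 2 + Yw 1 ^ 2 := by field_simp
  have hYwlb : b * Real.sqrt (1 - c ^ 2) ≤ ‖Yw‖ := by
    have h1 : Real.sqrt (b ^ 2 * (1 - c ^ 2)) ≤ Real.sqrt (‖Yw‖ ^ 2) :=
      Real.sqrt_le_sqrt hYwsq
    rwa [Real.sqrt_mul (sq_nonneg b), Real.sqrt_sq hb0.le,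
      Real.sqrt_sq (norm_nonneg _)] at h1
  -- final assembly
  have hle : ‖Matrix.toEuclideanCLM (𝕜 := ℝ) (y * x) u'‖ ≤ opNorm (y * x) * ‖u'‖ :=
    ContinuousLinearMap.le_opNorm _ _
  rw [hYX, norm_smul, hnu'] at hle
  have hnorm : ‖(a:ℝ) ^ 2‖ = a ^ 2 := by rw [Real.norm_eq_abs, abs_of_pos (by positivity)]
  rw [hnorm] at hle
  have hfin : a * ‖Yw‖ ≤ opNorm (y * x) := by
    have h2 : a * (a * ‖Yw‖) ≤ a * opNorm (y * x) := by
      calc a * (a * ‖Yw‖) = a ^ 2 * ‖Yw‖ := by ring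
        _ ≤ opNorm (y * x) * a := hle
        _ = a * opNorm (y * x) := by ring
    exact le_of_mul_le_mul_left h2 ha0
  calc b * a * Real.sqrt (1 - c ^ 2) = a * (b * Real.sqrt (1 - c ^ 2)) := by ring
    _ ≤ a * ‖Yw‖ := by
        exact mul_le_mul_of_nonneg_left hYwlb ha0.le
    _ ≤ opNorm (y * x) := hfin
end
end

section
/- Let z ∈ ℍ and let A ∈ SL(2,ℝ) satisfy tr A = 0 and A·z = z (so that A acts on ℍ as the hyperbolic half-turn about z). Then for every w ∈ ℍ: (1/2)·(1/Im w + 1/Im(A·w)) ≥ 1/Im z. (The key inequality in the proof of Lemma 2.2: if two points of ℍ are symmetric with respect to z, the average of the reciprocals of their imaginary parts is at least the reciprocal of the imaginary part of z.) -/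
noncomputable section

/-- If `A ∈ SL(2,ℝ)` has trace zero and fixes `z ∈ ℍ` (so it acts as the hyperbolic
half-turn about `z`), then for every `w ∈ ℍ` the average of the reciprocals of the
imaginary parts of `w` and `A·w` is at least the reciprocal of the imaginary part of `z`. -/
theorem stmt19 (z : ℂ) (hz : 0 < z.im) (A : Matrix (Fin 2) (Fin 2) ℝ)
    (hdet : A.det = 1) (htr : A.trace = 0) (hfix : moebius A z = z)
    (w : ℂ) (hw : 0 < w.im) :
    (1 / 2) * (1 / w.im + 1 / (moebius A w).im) ≥ 1 / z.im := by
  set a := A 0 0 with ha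
  set b := A 0 1 with hb
  set c := A 1 0 with hc
  set d := A 1 1 with hdd
  have htr' : a + d = 0 := by
    simpa [Matrix.trace_fin_two] using htr
  have hdet' : a * d - b * c = 1 := by
    simpa [Matrix.det_fin_two] using hdet
  have hd : d = -a := by linarith
  -- denominator at z is nonzero
  have hden : ((c : ℂ) * z + (d : ℂ)) ≠ 0 := by
    intro h
    rw [moebius, h, div_zero] at hfix
    rw [← hfix] at hz
    simp at hz
  have heq : (a : ℂ) * z + (b : ℂ) = z * ((c : ℂ) * z + (d : ℂ)) := by
    rw [moebius, div_eq_iff hden] at hfix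
    rw [ha, hb]
    exact hfix
  -- imaginary and real parts of fixed point equation
  have him0 : a * z.im = z.re * (c * z.im) + z.im * (c * z.re + d) := by
    have := congrArg Complex.im heq
    simpa [Complex.add_im, Complex.mul_im, Complex.mul_re, Complex.ofReal_re,
      Complex.ofReal_im] using this
  have hre0 : a * z.re + b = c * (z.re ^ 2 - z.im ^ 2) + d * z.re := by
    have := congrArg Complex.re heq
    simp [Complex.add_re, Complex.mul_re, Complex.mul_im, Complex.ofReal_re,
      Complex.ofReal_im] at this
    nlinarith [this]
  have hax : a = c * z.re := by
    have h1 : 2 * a * z.im = 2 * c * z.re * z.im := by nlinarith [him0, hd]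
    have hy := hz.ne'
    have h2 : (2 * a - 2 * c * z.re) * z.im = 0 := by linarith
    rcases mul_eq_zero.mp h2 with h | h
    · linarith
    · exact absurd h hy
  have hbv : b = -c * (z.re ^ 2 + z.im ^ 2) := by
    linear_combination hre0 + z.re * hd - 2 * z.re * hax
  have hc2 : c ^ 2 * z.im ^ 2 = 1 := by
    linear_combination hdet' - a * hd + (a + c * z.re) * hax + c * hbv
  have hcne : c ≠ 0 := by
    intro h; rw [h] at hc2; simp at hc2
  -- imaginary part of A·w
  set N : ℝ := (c * w.re + d) ^ 2 + (c * w.im) ^ 2 with hN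
  have hNpos : 0 < N := by
    have h1 : c * w.im ≠ 0 := mul_ne_zero hcne hw.ne'
    rw [hN]; positivity
  have hnsq : Complex.normSq ((c : ℂ) * w + (d : ℂ)) = N := by
    rw [Complex.normSq_apply, hN]
    simp only [Complex.add_re, Complex.add_im, Complex.mul_re, Complex.mul_im,
      Complex.ofReal_re, Complex.ofReal_im]
    ring
  have him : (moebius A w).im = w.im / N := by
    rw [moebius, ← ha, ← hb, ← hc, ← hdd, Complex.div_im, hnsq, div_sub_div_same]
    congr 1
    simp only [Complex.add_re, Complex.add_im, Complex.mul_re, Complex.mul_im,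
      Complex.ofReal_re, Complex.ofReal_im]
    linear_combination w.im * hdet'
  have key : 1 / w.im + 1 / (moebius A w).im ≥ 2 / z.im := by
    rw [him, one_div_div, ← add_div, ge_iff_le, div_le_div_iff₀ hz hw, hN]
    nlinarith [sq_nonneg (z.im - w.im),
      mul_nonneg (sq_nonneg (c * w.re + d)) hz.le, hz,
      mul_pos hz hz, sq_nonneg (c * w.im * z.im - 1), hc2,
      mul_nonneg (mul_nonneg hw.le hw.le) hz.le]
  have h2 : (1 / 2 : ℝ) * (2 / z.im) = 1 / z.im := by ring
  linarith [key]
end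
end
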